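/- For all sequences S, T ∈ Σ^∞, mdim_FS(S:T) ≤ min{dim_FS(S), dim_FS(T)}. -/

import Mathlib

open Filter Real

/-- A finite-state compressor on alphabet `Γ`. -/
structure FSC (Γ : Type) where
  Q : Type
  fin : Fintype Q
  δ : Q → Γ → Q
  ν : Q → Γ → List Bool
  q0 : Q

attribute [instance] FSC.fin

/-- Extended transition function, starting from state `q`. -/
def FSC.runFrom {Γ : Type} (C : FSC Γ) : C.Q → List Γ → C.Q
  | q, [] => q
  | q, a :: u => C.runFrom (C.δ q a) u

/-- Output of the compressor started in state `q`. -/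
def FSC.outFrom {Γ : Type} (C : FSC Γ) : C.Q → List Γ → List Bool
  | _, [] => []
  | q, a :: u => C.ν q a ++ C.outFrom (C.δ q a) u

/-- Output of the compressor on input `u` (from the initial state). -/
def FSC.output {Γ : Type} (C : FSC Γ) (u : List Γ) : List Bool := C.outFrom C.q0 u

/-- Information-losslessness: `u ↦ (C(u), δ*(q₀,u))` is injective. -/
def FSC.IL {Γ : Type} (C : FSC Γ) : Prop :=
  Function.Injective fun u : List Γ => (C.output u, C.runFrom C.q0 u)

/-- Number of states. -/
def FSC.states {Γ : Type} (C : FSC Γ) : ℕ := Fintype.card C.Q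

/-- `L_C(w)`: the minimum over all states `q` of the output length of `C` started at `q`. -/
noncomputable def FSC.L {Γ : Type} (C : FSC Γ) (w : List Γ) : ℕ :=
  haveI : Nonempty C.Q := ⟨C.q0⟩
  Finset.univ.inf' Finset.univ_nonempty fun q => (C.outFrom q w).length

/-- Compression ratio of `u` attained by `C`, over an alphabet of size `k`. -/
noncomputable def compRatio (k : ℕ) {Γ : Type} (C : FSC Γ) (u : List Γ) : ℝ :=
  ((C.output u).length : ℝ) / (u.length * Real.logb 2 k)

/-- `ρ_t(u)`: the `t`-state compression ratio of `u`, a minimum over all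
information-lossless finite-state compressors on `k` with `t` states. -/
noncomputable def rhoFS (k : Type) [Fintype k] (t : ℕ) (u : List k) : ℝ :=
  sInf {x : ℝ | ∃ C : FSC k, C.IL ∧ C.states = t ∧
    x = ((C.output u).length : ℝ) / (u.length * Real.logb 2 (Fintype.card k))}

/-- `ρ_r(u,w)`: the `r`-state joint compression ratio of `u` and `w`. -/
noncomputable def rhoFSJoint (k : Type) [Fintype k] (r : ℕ) (u w : List k) : ℝ :=
  sInf {x : ℝ | ∃ C : FSC (k × k), C.IL ∧ C.states = r ∧
    x = ((C.output (u.zip w)).length : ℝ) / (u.length * Real.logb 2 (Fintype.card k))}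

/-- `ρ_{r,t}(u:w)`: the `r,t`-state mutual compression ratio between `u` and `w`. -/
noncomputable def rhoFSMutual (k : Type) [Fintype k] (r t : ℕ) (u w : List k) : ℝ :=
  rhoFS k t u + rhoFS k t w - rhoFSJoint k r u w

/-- The prefix of length `n` of a sequence, as a list. -/
def pre {k : Type} (S : ℕ → k) (n : ℕ) : List k := List.ofFn fun i : Fin n => S i

/-- Lower finite-state dimension of a sequence (compressor characterization). -/
noncomputable def dimFS (k : Type) [Fintype k] (S : ℕ → k) : ℝ :=
  limUnder Filter.atTop fun t =>
    Filter.atTop.liminf fun n => rhoFS k t (pre S n)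

/-- Lower finite-state mutual dimension between two sequences. -/
noncomputable def mdimFS (k : Type) [Fintype k] (S T : ℕ → k) : ℝ :=
  limUnder Filter.atTop fun r =>
    limUnder Filter.atTop fun t =>
      Filter.atTop.liminf fun n => rhoFSMutual k r t (pre S n) (pre T n)

/-- Upper finite-state mutual dimension between two sequences. -/
noncomputable def MdimFS (k : Type) [Fintype k] (S T : ℕ → k) : ℝ :=
  limUnder Filter.atTop fun r =>
    limUnder Filter.atTop fun t =>
      Filter.atTop.limsup fun n => rhoFSMutual k r t (pre S n) (pre T n)
section AuxDev

open Finset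

noncomputable def lg (x : ℝ) : ℝ := Real.logb 2 x

lemma lg_nonneg {x : ℝ} (hx : 1 ≤ x) : 0 ≤ lg x := Real.logb_nonneg one_lt_two hx

lemma lg_mono {x y : ℝ} (hx : 0 < x) (h : x ≤ y) : lg x ≤ lg y :=
  Real.logb_le_logb_of_le one_lt_two hx h

lemma lg_npow (n : ℕ) : lg ((2:ℝ) ^ n) = n := by
  simp [lg, Real.logb_pow, Real.logb_self_eq_one one_lt_two]

lemma lg_mul {x y : ℝ} (hx : x ≠ 0) (hy : y ≠ 0) : lg (x * y) = lg x + lg y :=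
  Real.logb_mul hx hy

lemma lg_div {x y : ℝ} (hx : x ≠ 0) (hy : y ≠ 0) : lg (x / y) = lg x - lg y :=
  Real.logb_div hx hy

/-! ### blocks, counts, block pseudo-entropy -/

def blk {Γ : Type} (m : ℕ) (z : List Γ) (i : ℕ) : List Γ := (z.drop (i * m)).take m

noncomputable def cnt {Γ : Type} (m : ℕ) (z : List Γ) (β : List Γ) : ℕ :=
  letI := Classical.decEq Γ
  ((Finset.range (z.length / m)).filter (fun i => blk m z i = β)).card

noncomputable def Hsum {Γ : Type} (m : ℕ) (z : List Γ) : ℝ :=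
  ∑ i ∈ Finset.range (z.length / m),
    lg ((z.length / m : ℕ) / (cnt m z (blk m z i) : ℝ))

lemma blk_length {Γ : Type} {m : ℕ} {z : List Γ} {i : ℕ}
    (hi : i < z.length / m) : (blk m z i).length = m := by
  have h1 : (i + 1) * m ≤ (z.length / m) * m := Nat.mul_le_mul_right m hi
  have h2 : (z.length / m) * m ≤ z.length := Nat.div_mul_le_self _ _
  have h4 : (i + 1) * m = i * m + m := by ring
  simp only [blk, List.length_take, List.length_drop]
  omega

lemma cnt_eq {Γ : Type} [DecidableEq Γ] (m : ℕ) (z : List Γ) (β : List Γ) :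
    cnt m z β = ((Finset.range (z.length / m)).filter (fun i => blk m z i = β)).card := by
  unfold cnt
  congr!

lemma cnt_pos {Γ : Type} {m : ℕ} {z : List Γ} {i : ℕ}
    (hi : i < z.length / m) : 0 < cnt m z (blk m z i) := by
  classical
  rw [cnt_eq]
  exact Finset.card_pos.2 ⟨i, Finset.mem_filter.2 ⟨Finset.mem_range.2 hi, rfl⟩⟩

lemma cnt_le {Γ : Type} (m : ℕ) (z : List Γ) (β : List Γ) :
    cnt m z β ≤ z.length / m := by
  classical
  rw [cnt_eq]
  exact le_trans (Finset.card_filter_le _ _) (by simp)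

lemma blk_map {Γ Δ : Type} (f : Γ → Δ) (m : ℕ) (z : List Γ) (i : ℕ) :
    blk m (z.map f) i = (blk m z i).map f := by
  simp [blk, List.map_take, List.map_drop]

lemma Hsum_map_le {Γ Δ : Type} (f : Γ → Δ) (m : ℕ) (z : List Γ) :
    Hsum m (z.map f) ≤ Hsum m z := by
  classical
  unfold Hsum
  have hlen : (z.map f).length = z.length := by simp
  rw [hlen]
  apply Finset.sum_le_sum
  intro i hi
  have hi' : i < z.length / m := Finset.mem_range.1 hi
  have h1 : 0 < cnt m z (blk m z i) := cnt_pos hi'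
  have h2 : cnt m z (blk m z i) ≤ cnt m (z.map f) (blk m (z.map f) i) := by
    rw [cnt_eq, cnt_eq, hlen]
    apply Finset.card_le_card
    intro j hj
    simp only [Finset.mem_filter, Finset.mem_range] at hj ⊢
    exact ⟨hj.1, by rw [blk_map, blk_map, hj.2]⟩
  have hN : 0 < z.length / m := by omega
  apply lg_mono
  · apply div_pos
    · exact_mod_cast hN
    · exact_mod_cast lt_of_lt_of_le h1 h2
  · apply div_le_div_of_nonneg_left
    · positivity
    · exact_mod_cast h1
    · exact_mod_cast h2

/-! ### FSC basics -/

namespace FSC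

variable {Γ : Type} (C : FSC Γ)

lemma runFrom_append (q : C.Q) (x y : List Γ) :
    C.runFrom q (x ++ y) = C.runFrom (C.runFrom q x) y := by
  induction x generalizing q with
  | nil => rfl
  | cons a x ih => simp [FSC.runFrom, ih]

lemma outFrom_append (q : C.Q) (x y : List Γ) :
    C.outFrom q (x ++ y) = C.outFrom q x ++ C.outFrom (C.runFrom q x) y := by
  induction x generalizing q with
  | nil => rfl
  | cons a x ih => simp [FSC.outFrom, FSC.runFrom, ih]

lemma il_inj_from {C : FSC Γ} (h : C.IL) (p : List Γ) {x y : List Γ}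
    (hout : C.outFrom (C.runFrom C.q0 p) x = C.outFrom (C.runFrom C.q0 p) y)
    (hrun : C.runFrom (C.runFrom C.q0 p) x = C.runFrom (C.runFrom C.q0 p) y) :
    x = y := by
  have := @h (p ++ x) (p ++ y) ?_
  · exact (List.append_cancel_left this)
  · simp only [FSC.output, outFrom_append, runFrom_append, hout, hrun]

lemma states_pos : 1 ≤ C.states := by
  have : Nonempty C.Q := ⟨C.q0⟩
  exact Fintype.card_pos

end FSC

/-- one-step padding -/
lemma pad_one {Γ : Type} (C : FSC Γ) (h : C.IL) :
    ∃ C' : FSC Γ, C'.IL ∧ C'.states = C.states + 1 ∧ ∀ u, C'.output u = C.output u := by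
  classical
  let C' : FSC Γ :=
    { Q := Option C.Q, fin := inferInstance,
      δ := fun q a => some (C.δ (q.getD C.q0) a),
      ν := fun q a => C.ν (q.getD C.q0) a,
      q0 := some C.q0 }
  have hrun : ∀ (u : List Γ) (q : C.Q), C'.runFrom (some q) u = some (C.runFrom q u) := by
    intro u
    induction u with
    | nil => intro q; rfl
    | cons a u ih => intro q; simpa [FSC.runFrom, C'] using ih (C.δ q a)
  have hout : ∀ (u : List Γ) (q : C.Q), C'.outFrom (some q) u = C.outFrom q u := by
    intro u
    induction u with
    | nil => intro q; rfl
    | cons a u ih => intro q; simpa [FSC.outFrom, C'] using ih (C.δ q a)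
  have houtput : ∀ u, C'.output u = C.output u := fun u => hout u C.q0
  refine ⟨C', ?_, ?_, houtput⟩
  · intro x y hxy
    simp only [Prod.mk.injEq] at hxy
    apply h
    have h1 : C'.runFrom C'.q0 x = C'.runFrom C'.q0 y := hxy.2
    have h2 : C'.output x = C'.output y := hxy.1
    rw [houtput, houtput] at h2
    have : C'.q0 = some C.q0 := rfl
    rw [this, hrun, hrun] at h1
    exact Prod.ext h2 (Option.some_injective _ h1)
  · simp [FSC.states, C', Fintype.card_option]

lemma exists_pad {Γ : Type} (C : FSC Γ) (h : C.IL) {t : ℕ} (ht : C.states ≤ t) :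
    ∃ C' : FSC Γ, C'.IL ∧ C'.states = t ∧ ∀ u, C'.output u = C.output u := by
  induction t, ht using Nat.le_induction with
  | base => exact ⟨C, h, rfl, fun _ => rfl⟩
  | succ t ht ih =>
    obtain ⟨C', h1, h2, h3⟩ := ih
    obtain ⟨C'', g1, g2, g3⟩ := pad_one C' h1
    exact ⟨C'', g1, by omega, fun u => (g3 u).trans (h3 u)⟩

/-! ### Gibbs-type inequalities -/

lemma gibbs {κ : Type} (t : Finset κ) (d q : κ → ℝ) (A : ℝ) (hA : 0 < A)
    (hd : ∀ x ∈ t, 0 < d x) (hq : ∀ x ∈ t, 0 < q x) (hqA : ∑ x ∈ t, q x ≤ A) :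
    ∑ x ∈ t, d x * lg ((∑ y ∈ t, d y) / d x)
      ≤ ∑ x ∈ t, d x * lg (1 / q x) + (∑ y ∈ t, d y) * lg A := by
  rcases t.eq_empty_or_nonempty with rfl | hne
  · simp
  have hD : 0 < ∑ y ∈ t, d y := Finset.sum_pos hd hne
  set D := ∑ y ∈ t, d y with hDdef
  have hlog2 : (0:ℝ) < Real.log 2 := Real.log_pos one_lt_two
  have main : ∑ x ∈ t, (d x * lg (D / d x) - d x * lg (1 / q x) - d x * lg A) ≤ 0 := by
    have step : ∀ x ∈ t, d x * lg (D / d x) - d x * lg (1 / q x) - d x * lg A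
        ≤ (D * q x / A - d x) / Real.log 2 := by
      intro x hx
      have hdx := hd x hx
      have hqx := hq x hx
      have hE : (0:ℝ) < D * q x / (d x * A) := by positivity
      have hlog := Real.log_le_sub_one_of_pos hE
      have heq : d x * lg (D / d x) - d x * lg (1 / q x) - d x * lg A
          = d x * Real.log (D * q x / (d x * A)) / Real.log 2 := by
        simp only [lg, Real.logb]
        rw [Real.log_div (by positivity) (by positivity),
            Real.log_div (by positivity) (by positivity),
            Real.log_div (by positivity) (by positivity),
            Real.log_mul (by positivity) (by positivity),
            Real.log_mul (by positivity) (by positivity), Real.log_one]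
        field_simp
        ring
      rw [heq]
      rw [div_le_div_iff_of_pos_right hlog2]
      have h1 : d x * Real.log (D * q x / (d x * A)) ≤ d x * (D * q x / (d x * A) - 1) :=
        mul_le_mul_of_nonneg_left hlog (le_of_lt hdx)
      refine le_trans h1 (le_of_eq ?_)
      field_simp
    refine le_trans (Finset.sum_le_sum step) ?_
    rw [← Finset.sum_div]
    apply div_nonpos_of_nonpos_of_nonneg _ (le_of_lt hlog2)
    rw [Finset.sum_sub_distrib]
    have h2 : ∑ x ∈ t, D * q x / A = (D / A) * ∑ x ∈ t, q x := by
      rw [Finset.mul_sum]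
      apply Finset.sum_congr rfl
      intro x _
      ring
    rw [h2]
    have h3 : (D / A) * ∑ x ∈ t, q x ≤ (D / A) * A :=
      mul_le_mul_of_nonneg_left hqA (by positivity)
    rw [div_mul_cancel₀ _ (ne_of_gt hA)] at h3
    linarith
  have expand : ∑ x ∈ t, (d x * lg (D / d x) - d x * lg (1 / q x) - d x * lg A)
      = ∑ x ∈ t, d x * lg (D / d x) - ∑ x ∈ t, d x * lg (1 / q x) - D * lg A := by
    rw [Finset.sum_sub_distrib, Finset.sum_sub_distrib, ← Finset.sum_mul]
  rw [expand] at main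
  linarith

lemma occ_gibbs {ι κ : Type} [DecidableEq κ] (s : Finset ι) (key : ι → κ)
    (q : κ → ℝ) (A : ℝ) (hA : 0 < A)
    (hq : ∀ i ∈ s, 0 < q (key i))
    (hqA : ∑ x ∈ s.image key, q x ≤ A) :
    ∑ i ∈ s, lg ((s.card : ℝ) / ((s.filter (fun j => key j = key i)).card : ℝ))
      ≤ ∑ i ∈ s, lg (1 / q (key i)) + s.card * lg A := by
  classical
  have hmaps : ∀ i ∈ s, key i ∈ s.image key := fun i hi => Finset.mem_image_of_mem key hi
  have hcardsum : (s.card : ℝ)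
      = ∑ b ∈ s.image key, ((s.filter (fun j => key j = b)).card : ℝ) := by
    rw [Finset.card_eq_sum_card_fiberwise hmaps]
    push_cast
    rfl
  have hL : ∑ i ∈ s, lg ((s.card : ℝ) / ((s.filter (fun j => key j = key i)).card : ℝ))
      = ∑ b ∈ s.image key, ((s.filter (fun j => key j = b)).card : ℝ) *
          lg ((s.card : ℝ) / ((s.filter (fun j => key j = b)).card : ℝ)) := by
    rw [Finset.sum_comp
      (fun b => lg ((s.card : ℝ) / ((s.filter (fun j => key j = b)).card : ℝ))) key]
    simp [nsmul_eq_mul]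
  have hR : ∑ i ∈ s, lg (1 / q (key i))
      = ∑ b ∈ s.image key, ((s.filter (fun j => key j = b)).card : ℝ) * lg (1 / q b) := by
    rw [Finset.sum_comp (fun b => lg (1 / q b)) key]
    simp [nsmul_eq_mul]
  rw [hL, hR, hcardsum]
  apply gibbs _ _ _ A hA
  · intro b hb
    obtain ⟨i, hi, rfl⟩ := Finset.mem_image.1 hb
    have : i ∈ s.filter (fun j => key j = key i) := Finset.mem_filter.2 ⟨hi, rfl⟩
    exact_mod_cast Finset.card_pos.2 ⟨i, this⟩
  · intro b hb
    obtain ⟨i, hi, rfl⟩ := Finset.mem_image.1 hb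
    exact hq i hi
  · exact hqA

lemma sum_lg_refine {ι κ1 κ2 : Type} [DecidableEq κ1] [DecidableEq κ2] (s : Finset ι)
    (f : ι → κ1) (g : ι → κ2) (R : ℕ) (hR : 1 ≤ R)
    (hcard : ∀ i ∈ s, ((s.filter (fun j => f j = f i)).image g).card ≤ R) :
    ∑ i ∈ s, lg (((s.filter (fun j => f j = f i)).card : ℝ) /
        ((s.filter (fun j => f j = f i ∧ g j = g i)).card : ℝ)) ≤ s.card * lg R := by
  classical
  have hmaps : ∀ i ∈ s, f i ∈ s.image f := fun i hi => Finset.mem_image_of_mem f hi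
  rw [← Finset.sum_fiberwise_of_maps_to hmaps
    (fun i => lg (((s.filter (fun j => f j = f i)).card : ℝ) /
        ((s.filter (fun j => f j = f i ∧ g j = g i)).card : ℝ)))]
  have hcardsum : (s.card : ℝ)
      = ∑ b ∈ s.image f, ((s.filter (fun j => f j = b)).card : ℝ) := by
    rw [Finset.card_eq_sum_card_fiberwise hmaps]
    push_cast
    rfl
  have inner : ∀ b ∈ s.image f,
      ∑ i ∈ s.filter (fun j => f j = b),
        lg (((s.filter (fun j => f j = f i)).card : ℝ) /
          ((s.filter (fun j => f j = f i ∧ g j = g i)).card : ℝ))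
        ≤ ((s.filter (fun j => f j = b)).card : ℝ) * lg R := by
    intro b hb
    set sb := s.filter (fun j => f j = b) with hsb
    obtain ⟨i0, hi0s, hi0⟩ := Finset.mem_image.1 hb
    have hsbne : sb.Nonempty := ⟨i0, Finset.mem_filter.2 ⟨hi0s, hi0⟩⟩
    set zb := (sb.image g).card with hzb
    have hzbpos : 0 < zb := Finset.card_pos.2 (hsbne.image g)
    have hzR : zb ≤ R := by
      have h5 := hcard i0 hi0s
      have h6 : s.filter (fun j => f j = f i0) = sb := by
        rw [hsb, hi0]
      rw [h6] at h5
      exact h5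
    have hrw : ∀ i ∈ sb,
        lg (((s.filter (fun j => f j = f i)).card : ℝ) /
          ((s.filter (fun j => f j = f i ∧ g j = g i)).card : ℝ))
        = lg ((sb.card : ℝ) / ((sb.filter (fun j => g j = g i)).card : ℝ)) := by
      intro i hi
      have hfi : f i = b := (Finset.mem_filter.1 hi).2
      have e1 : s.filter (fun j => f j = f i) = sb := by rw [hsb, hfi]
      have e2 : s.filter (fun j => f j = f i ∧ g j = g i)
          = sb.filter (fun j => g j = g i) := by
        rw [hsb, Finset.filter_filter, hfi]
      rw [e1, e2]
    rw [Finset.sum_congr rfl hrw]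
    have h2 := occ_gibbs sb g (fun _ => (zb:ℝ)⁻¹) 1 one_pos
      (fun i _ => by positivity) ?_
    · refine le_trans h2 ?_
      have h3 : ∑ i ∈ sb, lg (1 / ((zb:ℝ)⁻¹)) ≤ (sb.card : ℝ) * lg R := by
        rw [Finset.sum_const, nsmul_eq_mul]
        apply mul_le_mul_of_nonneg_left _ (by positivity)
        rw [one_div, inv_inv]
        exact lg_mono (by exact_mod_cast hzbpos) (by exact_mod_cast hzR)
      simp only [lg, Real.logb_one]  -- lg 1 = 0
      simp only [lg, Real.logb] at h3 ⊢
      linarith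
    · rw [Finset.sum_const, nsmul_eq_mul]
      exact le_of_eq (mul_inv_cancel₀ (by exact_mod_cast ne_of_gt hzbpos))
  refine le_trans (Finset.sum_le_sum inner) (le_of_eq ?_)
  rw [← Finset.sum_mul, ← hcardsum]

/-! ### Kraft converse -/

lemma kraft {ι : Type} [Fintype ι] (ℓ : ι → ℕ)
    (h : ∑ i : ι, ((2:ℝ) ^ ℓ i)⁻¹ ≤ 1) :
    ∃ code : ι → List Bool, (∀ i, (code i).length = ℓ i) ∧
      ∀ i j, i ≠ j → ¬ (code i <+: code j) := by
  classical
  rcases isEmpty_or_nonempty ι with hempty | hne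
  · exact ⟨fun _ => [], fun i => (hempty.false i).elim, fun i j _ => (hempty.false i).elim⟩
  set n := Fintype.card ι with hn
  have hnpos : 0 < n := Fintype.card_pos
  set e : ι → ℕ := fun i => ((Fintype.equivFin ι) i : ℕ) with he
  have helt : ∀ i, e i < n := fun i => (Fintype.equivFin ι i).2
  set keyf : ι → ℕ := fun i => ℓ i * n + e i with hkeyf
  have hkey_lt : ∀ i j, ℓ i < ℓ j → keyf i < keyf j := by
    intro i j hij
    have h1 := helt i
    have h2 : (ℓ i + 1) * n ≤ ℓ j * n := Nat.mul_le_mul_right n hij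
    have h3 : (ℓ i + 1) * n = ℓ i * n + n := by ring
    simp only [hkeyf]
    omega
  have hkey_le : ∀ i j, keyf i ≤ keyf j → ℓ i ≤ ℓ j := by
    intro i j hij
    by_contra hcon
    have := hkey_lt j i (by omega)
    omega
  have hkeyinj : ∀ i j : ι, keyf i = keyf j → i = j := by
    intro i j hij
    have hll : ℓ i = ℓ j := le_antisymm (hkey_le i j hij.le) (hkey_le j i hij.ge)
    have hee : e i = e j := by
      simp only [hkeyf] at hij
      rw [hll] at hij
      omega
    exact (Fintype.equivFin ι).injective (Fin.ext hee)
  set prev : ι → Finset ι := fun i => Finset.univ.filter (fun j => keyf j < keyf i) with hprev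
  set c : ι → ℕ := fun i => ∑ j ∈ prev i, 2 ^ (ℓ i - ℓ j) with hc
  have hnotmem : ∀ i, i ∉ prev i := by
    intro i
    simp [hprev]
  have hsubℓ : ∀ i, ∀ j ∈ prev i, ℓ j ≤ ℓ i := by
    intro i j hj
    exact hkey_le j i (le_of_lt (Finset.mem_filter.1 hj).2)
  have hckey : ∀ i, ((c i : ℝ) + 1) * ((2:ℝ) ^ ℓ i)⁻¹ ≤ 1 := by
    intro i
    have hcast : (c i : ℝ) * ((2:ℝ) ^ ℓ i)⁻¹ = ∑ j ∈ prev i, ((2:ℝ) ^ ℓ j)⁻¹ := by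
      simp only [hc]
      push_cast
      rw [Finset.sum_mul]
      apply Finset.sum_congr rfl
      intro j hj
      rw [pow_sub₀ (2:ℝ) two_ne_zero (hsubℓ i j hj)]
      have h2 : ((2:ℝ) ^ ℓ i) ≠ 0 := by positivity
      field_simp
    have hsum : ∑ j ∈ insert i (prev i), ((2:ℝ) ^ ℓ j)⁻¹ ≤ 1 :=
      le_trans (Finset.sum_le_sum_of_subset_of_nonneg (Finset.subset_univ _)
        (fun j _ _ => by positivity)) h
    rw [Finset.sum_insert (hnotmem i)] at hsum
    have hexp : ((c i : ℝ) + 1) * ((2:ℝ) ^ ℓ i)⁻¹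
        = (c i : ℝ) * ((2:ℝ) ^ ℓ i)⁻¹ + ((2:ℝ) ^ ℓ i)⁻¹ := by ring
    rw [hexp, hcast]
    linarith
  have hclt : ∀ i, c i < 2 ^ ℓ i := by
    intro i
    have h1 := hckey i
    have h2 : (0:ℝ) < (2:ℝ) ^ ℓ i := by positivity
    have h3 : ((2:ℝ) ^ ℓ i) * ((2:ℝ) ^ ℓ i)⁻¹ = 1 := mul_inv_cancel₀ (ne_of_gt h2)
    have h4 : ((c i : ℝ) + 1) ≤ (2:ℝ) ^ ℓ i := by nlinarith
    have h5 : ((c i + 1 : ℕ) : ℝ) ≤ (((2:ℕ) ^ ℓ i : ℕ) : ℝ) := by push_cast; linarith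
    have h6 : c i + 1 ≤ 2 ^ ℓ i := by exact_mod_cast h5
    omega
  -- the step inequality for strictly earlier indices
  have hstep : ∀ i j, keyf i < keyf j → 2 ^ (ℓ j - ℓ i) * (c i + 1) ≤ c j := by
    intro i j hij
    have hli : ℓ i ≤ ℓ j := hkey_le i j hij.le
    have hsubset : insert i (prev i) ⊆ prev j := by
      intro x hx
      rcases Finset.mem_insert.1 hx with rfl | hx
      · exact Finset.mem_filter.2 ⟨Finset.mem_univ _, hij⟩
      · exact Finset.mem_filter.2 ⟨Finset.mem_univ _,
          lt_trans (Finset.mem_filter.1 hx).2 hij⟩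
    have hcal : 2 ^ (ℓ j - ℓ i) * (c i + 1) = ∑ x ∈ insert i (prev i), 2 ^ (ℓ j - ℓ x) := by
      rw [Finset.sum_insert (hnotmem i)]
      have hsplit : (2:ℕ) ^ (ℓ j - ℓ i) * (c i + 1)
          = 2 ^ (ℓ j - ℓ i) * c i + 2 ^ (ℓ j - ℓ i) := by ring
      rw [hsplit, add_comm]
      congr 1
      rw [hc]
      simp only
      rw [Finset.mul_sum]
      apply Finset.sum_congr rfl
      intro x hx
      rw [← pow_add]
      congr 1
      have h7 := hsubℓ i x hx
      omega
    rw [hcal]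
    exact Finset.sum_le_sum_of_subset hsubset
  refine ⟨fun i => List.ofFn (fun b : Fin (ℓ i) => Nat.testBit (c i) (ℓ i - 1 - b)),
    fun i => by simp, ?_⟩
  intro i j hij hpre
  have hlen : ℓ i ≤ ℓ j := by simpa using hpre.length_le
  have bits : ∀ p, p < ℓ i →
      Nat.testBit (c i) (ℓ i - 1 - p) = Nat.testBit (c j) (ℓ j - 1 - p) := by
    intro p hp
    have hp' : p < (List.ofFn (fun b : Fin (ℓ i) => Nat.testBit (c i) (ℓ i - 1 - b))).length := by
      simpa using hp
    have := hpre.getElem hp'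
    rw [List.getElem_ofFn, List.getElem_ofFn] at this
    exact this
  have hd : c j / 2 ^ (ℓ j - ℓ i) = c i := by
    rw [← Nat.shiftRight_eq_div_pow]
    apply Nat.eq_of_testBit_eq
    intro b
    rw [Nat.testBit_shiftRight]
    by_cases hb : b < ℓ i
    · have hbits := bits (ℓ i - 1 - b) (by omega)
      have e1 : ℓ i - 1 - (ℓ i - 1 - b) = b := by omega
      have e2 : ℓ j - 1 - (ℓ i - 1 - b) = (ℓ j - ℓ i) + b := by omega
      rw [e1, e2] at hbits
      exact hbits.symm
    · have hfi : Nat.testBit (c i) b = false :=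
        Nat.testBit_lt_two_pow (lt_of_lt_of_le (hclt i)
          (Nat.pow_le_pow_right (by norm_num) (by omega)))
      have hfj : Nat.testBit (c j) ((ℓ j - ℓ i) + b) = false :=
        Nat.testBit_lt_two_pow (lt_of_lt_of_le (hclt j)
          (Nat.pow_le_pow_right (by norm_num) (by omega)))
      rw [hfi, hfj]
  rcases lt_trichotomy (keyf i) (keyf j) with hlt | heq | hgt
  · have h1 := hstep i j hlt
    have h2 : c i + 1 ≤ c j / 2 ^ (ℓ j - ℓ i) := by
      rw [Nat.le_div_iff_mul_le (by positivity : 0 < 2 ^ (ℓ j - ℓ i)), mul_comm]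
      exact h1
    rw [hd] at h2
    omega
  · exact hij (hkeyinj i j heq)
  · have hlj : ℓ j ≤ ℓ i := hkey_le j i hgt.le
    have hll : ℓ i = ℓ j := le_antisymm hlen hlj
    have h1 := hstep j i hgt
    rw [hll, Nat.sub_self, pow_zero, one_mul] at h1
    rw [hll, Nat.sub_self, pow_zero, Nat.div_one] at hd
    omega

/-! ### the block coding machine -/

noncomputable instance fintypeListLt (Γ : Type) [Fintype Γ] [Nonempty Γ] (m : ℕ) :
    Fintype {l : List Γ // l.length < m} := by
  classical
  exact Fintype.ofSurjective
    (fun p : Fin m × (Fin m → Γ) =>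
      ⟨(List.ofFn p.2).take p.1, by
        simp only [List.length_take, List.length_ofFn]
        exact lt_of_le_of_lt (min_le_left _ _) p.1.2⟩)
    (by
      rintro ⟨l, hl⟩
      refine ⟨⟨⟨l.length, hl⟩, fun i => l.getD i (Classical.arbitrary Γ)⟩, ?_⟩
      apply Subtype.ext
      apply List.ext_getElem
      · simp only [List.length_take, List.length_ofFn]
        omega
      · intro i h1 h2
        simp only [List.getElem_take, List.getElem_ofFn]
        exact List.getD_eq_getElem l _ h2)

lemma list_sum_range (f : ℕ → ℕ) (n : ℕ) :
    ((List.range n).map f).sum = ∑ i ∈ Finset.range n, f i := by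
  induction n with
  | zero => simp
  | succ n ih =>
    rw [List.range_succ, List.map_append, List.sum_append, Finset.sum_range_succ, ih]
    simp

noncomputable def blockFSC (Γ : Type) [Fintype Γ] [Nonempty Γ] (m : ℕ) (hm : 0 < m)
    (code : List Γ → List Bool) : FSC Γ where
  Q := {l : List Γ // l.length < m}
  fin := inferInstance
  δ q a := if _h : q.1.length + 1 = m then ⟨[], by simpa using hm⟩
    else ⟨q.1 ++ [a], by
      have := q.2
      simp only [List.length_append, List.length_singleton]
      omega⟩
  ν q a := if q.1.length + 1 = m then code (q.1 ++ [a]) else []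
  q0 := ⟨[], by simpa using hm⟩

section BlockFSC

variable {Γ : Type} [Fintype Γ] [Nonempty Γ] {m : ℕ} (hm : 0 < m)
  (code : List Γ → List Bool)

lemma blockFSC_partial :
    ∀ (b : List Γ) (q : (blockFSC Γ m hm code).Q), q.1.length + b.length < m →
      ((blockFSC Γ m hm code).runFrom q b).1 = q.1 ++ b ∧
        (blockFSC Γ m hm code).outFrom q b = [] := by
  intro b
  induction b with
  | nil => intro q _; exact ⟨by simp [FSC.runFrom], rfl⟩
  | cons a b ih =>
    intro q hq
    simp only [List.length_cons] at hq
    have hlen : ¬ (q.1.length + 1 = m) := by omega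
    have hδ1 : ((blockFSC Γ m hm code).δ q a).1 = q.1 ++ [a] := by
      simp [blockFSC, hlen]
    have hδlen : ((blockFSC Γ m hm code).δ q a).1.length + b.length < m := by
      rw [hδ1]
      simp only [List.length_append, List.length_singleton]
      omega
    obtain ⟨r1, r2⟩ := ih ((blockFSC Γ m hm code).δ q a) hδlen
    constructor
    · show ((blockFSC Γ m hm code).runFrom ((blockFSC Γ m hm code).δ q a) b).1 = _
      rw [r1, hδ1, List.append_assoc, List.singleton_append]
    · show (blockFSC Γ m hm code).ν q a ++
        (blockFSC Γ m hm code).outFrom ((blockFSC Γ m hm code).δ q a) b = []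
      rw [r2]
      simp [blockFSC, hlen]

lemma blockFSC_complete :
    ∀ (b : List Γ) (q : (blockFSC Γ m hm code).Q), q.1.length + b.length = m →
      ((blockFSC Γ m hm code).runFrom q b).1 = [] ∧
        (blockFSC Γ m hm code).outFrom q b = code (q.1 ++ b) := by
  intro b
  induction b with
  | nil =>
    intro q hq
    exfalso
    have := q.2
    simp only [List.length_nil] at hq
    omega
  | cons a b ih =>
    intro q hq
    simp only [List.length_cons] at hq
    by_cases hfull : q.1.length + 1 = m
    · have hb : b = [] := List.length_eq_zero_iff.1 (by omega)
      subst hb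
      have hδ1 : ((blockFSC Γ m hm code).δ q a).1 = [] := by
        simp [blockFSC, hfull]
      refine ⟨?_, ?_⟩
      · show ((blockFSC Γ m hm code).runFrom ((blockFSC Γ m hm code).δ q a) []).1 = []
        exact hδ1
      · show (blockFSC Γ m hm code).ν q a ++
          (blockFSC Γ m hm code).outFrom ((blockFSC Γ m hm code).δ q a) [] = code (q.1 ++ [a])
        simp [blockFSC, hfull, FSC.outFrom]
    · have hδ1 : ((blockFSC Γ m hm code).δ q a).1 = q.1 ++ [a] := by
        simp [blockFSC, hfull]
      have hδlen : ((blockFSC Γ m hm code).δ q a).1.length + b.length = m := by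
        rw [hδ1]
        simp only [List.length_append, List.length_singleton]
        omega
      obtain ⟨r1, r2⟩ := ih ((blockFSC Γ m hm code).δ q a) hδlen
      refine ⟨r1, ?_⟩
      show (blockFSC Γ m hm code).ν q a ++
        (blockFSC Γ m hm code).outFrom ((blockFSC Γ m hm code).δ q a) b = code (q.1 ++ a :: b)
      rw [r2, hδ1, List.append_assoc, List.singleton_append]
      simp [blockFSC, hfull]

lemma blockFSC_take (z : List Γ) :
    ∀ i, i ≤ z.length / m →
      ((blockFSC Γ m hm code).runFrom (blockFSC Γ m hm code).q0 (z.take (i*m))).1 = [] ∧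
      (blockFSC Γ m hm code).outFrom (blockFSC Γ m hm code).q0 (z.take (i*m)) =
        (((List.range i).map (fun j => code (blk m z j))).flatten) ∧
      z.take (i*m) = ((List.range i).map (blk m z)).flatten := by
  intro i
  induction i with
  | zero =>
    intro _
    rw [Nat.zero_mul, List.take_zero]
    exact ⟨rfl, rfl, by simp⟩
  | succ i ih =>
    intro hi
    obtain ⟨r1, r2, r3⟩ := ih (by omega)
    have hblk : (blk m z i).length = m := blk_length (by omega)
    have htake : z.take ((i+1)*m) = z.take (i*m) ++ blk m z i := by
      have he : (i+1)*m = i*m + m := by ring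
      rw [he, List.take_add]
      rfl
    have hcomp := blockFSC_complete hm code (blk m z i)
      ((blockFSC Γ m hm code).runFrom (blockFSC Γ m hm code).q0 (z.take (i*m)))
      (by rw [r1, hblk]; simp)
    refine ⟨?_, ?_, ?_⟩
    · rw [htake, FSC.runFrom_append]
      exact hcomp.1
    · rw [htake, FSC.outFrom_append, r2, hcomp.2, r1]
      rw [List.range_succ, List.map_append, List.flatten_append]
      simp
    · rw [htake, r3, List.range_succ, List.map_append, List.flatten_append]
      simp

lemma blockFSC_run (z : List Γ) :
    ((blockFSC Γ m hm code).runFrom (blockFSC Γ m hm code).q0 z).1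
        = z.drop ((z.length / m) * m) ∧
      (blockFSC Γ m hm code).output z =
        ((List.range (z.length / m)).map (fun j => code (blk m z j))).flatten := by
  set N := z.length / m with hN
  have h5 := Nat.div_add_mod z.length m
  have h6 := Nat.mod_lt z.length hm
  have h7 : m * (z.length / m) = (z.length / m) * m := by ring
  have h9 : N * m = (z.length / m) * m := by rw [hN]
  have hdroplen : (z.drop (N * m)).length = z.length % m := by
    simp only [List.length_drop]
    omega
  obtain ⟨r1, r2, _⟩ := blockFSC_take hm code z N (le_refl _)
  have hsplit : z.take (N * m) ++ z.drop (N * m) = z := List.take_append_drop _ _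
  have hpart := blockFSC_partial hm code (z.drop (N * m))
    ((blockFSC Γ m hm code).runFrom (blockFSC Γ m hm code).q0 (z.take (N*m)))
    (by rw [r1, hdroplen]; simpa using h6)
  constructor
  · conv_lhs => rw [← hsplit]
    rw [FSC.runFrom_append, hpart.1, r1, List.nil_append]
  · show (blockFSC Γ m hm code).outFrom (blockFSC Γ m hm code).q0 z = _
    conv_lhs => rw [← hsplit]
    rw [FSC.outFrom_append, hpart.2, r2, List.append_nil]

end BlockFSC

lemma exists_block_machine {Γ : Type} [Fintype Γ] [Nonempty Γ] (m : ℕ) (hm : 1 ≤ m)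
    (code : List Γ → List Bool)
    (h1 : ∀ β : List Γ, β.length = m → 1 ≤ (code β).length)
    (h2 : ∀ β γ : List Γ, β.length = m → γ.length = m → β ≠ γ → ¬ (code β <+: code γ)) :
    ∃ C : FSC Γ, C.IL ∧ C.states = Fintype.card {l : List Γ // l.length < m} ∧
      ∀ z : List Γ, ((C.output z).length : ℕ)
        = ∑ i ∈ Finset.range (z.length / m), (code (blk m z i)).length := by
  classical
  have hm0 : 0 < m := hm
  set M := blockFSC Γ m hm0 code with hM
  have hdec : ∀ bs cs : List (List Γ), (∀ b ∈ bs, b.length = m) → (∀ c ∈ cs, c.length = m) →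
      (bs.map code).flatten = (cs.map code).flatten → bs = cs := by
    intro bs
    induction bs with
    | nil =>
      intro cs _ hcs hflat
      cases cs with
      | nil => rfl
      | cons c cs =>
        exfalso
        have hc1 := h1 c (hcs c (by simp))
        simp only [List.map_nil, List.flatten_nil, List.map_cons, List.flatten_cons] at hflat
        have := congrArg List.length hflat
        simp only [List.length_nil, List.length_append] at this
        omega
    | cons b bs ih =>
      intro cs hbs hcs hflat
      cases cs with
      | nil =>
        exfalso
        have hb1 := h1 b (hbs b (by simp))
        simp only [List.map_nil, List.flatten_nil, List.map_cons, List.flatten_cons] at hflat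
        have := congrArg List.length hflat
        simp only [List.length_nil, List.length_append] at this
        omega
      | cons c cs =>
        simp only [List.map_cons, List.flatten_cons] at hflat
        have hbc : b = c := by
          by_contra hne
          have hp1 : code b <+: (code b ++ (bs.map code).flatten) := List.prefix_append _ _
          have hp2 : code c <+: (code b ++ (bs.map code).flatten) := ⟨_, hflat.symm⟩
          rcases List.prefix_or_prefix_of_prefix hp1 hp2 with hp | hp
          · exact h2 b c (hbs b (by simp)) (hcs c (by simp)) hne hp
          · exact h2 c b (hcs c (by simp)) (hbs b (by simp)) (Ne.symm hne) hp
        subst hbc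
        have htl : (bs.map code).flatten = (cs.map code).flatten :=
          List.append_cancel_left hflat
        rw [ih cs (fun x hx => hbs x (by simp [hx])) (fun x hx => hcs x (by simp [hx])) htl]
  refine ⟨M, ?_, rfl, ?_⟩
  · intro x y hxy
    simp only [Prod.mk.injEq] at hxy
    obtain ⟨hout, hrun⟩ := hxy
    have hxr := blockFSC_run hm0 code x
    have hyr := blockFSC_run hm0 code y
    have hbs : (List.range (x.length / m)).map (blk m x)
        = (List.range (y.length / m)).map (blk m y) := by
      apply hdec
      · intro b hb
        obtain ⟨j, hj, rfl⟩ := List.mem_map.1 hb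
        exact blk_length (List.mem_range.1 hj)
      · intro b hb
        obtain ⟨j, hj, rfl⟩ := List.mem_map.1 hb
        exact blk_length (List.mem_range.1 hj)
      · rw [List.map_map, List.map_map]
        have e1 : code ∘ blk m x = fun j => code (blk m x j) := rfl
        have e2 : code ∘ blk m y = fun j => code (blk m y j) := rfl
        rw [e1, e2, ← hxr.2, ← hyr.2]
        exact hout
    have hNeq : x.length / m = y.length / m := by
      have := congrArg List.length hbs
      simpa using this
    have hdrop : x.drop ((x.length / m) * m) = y.drop ((y.length / m) * m) := by
      rw [← hxr.1, ← hyr.1, hrun]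
    obtain ⟨_, _, hx3⟩ := blockFSC_take hm0 code x (x.length / m) (le_refl _)
    obtain ⟨_, _, hy3⟩ := blockFSC_take hm0 code y (y.length / m) (le_refl _)
    calc x = x.take ((x.length / m) * m) ++ x.drop ((x.length / m) * m) :=
          (List.take_append_drop _ _).symm
      _ = ((List.range (x.length / m)).map (blk m x)).flatten
            ++ x.drop ((x.length / m) * m) := by rw [hx3]
      _ = ((List.range (y.length / m)).map (blk m y)).flatten
            ++ y.drop ((y.length / m) * m) := by rw [hbs, hdrop]
      _ = y.take ((y.length / m) * m) ++ y.drop ((y.length / m) * m) := by rw [hy3]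
      _ = y := List.take_append_drop _ _
  · intro z
    have hout := (blockFSC_run hm0 code z).2
    rw [hout, List.length_flatten, List.map_map, list_sum_range]
    rfl

/-! ### flat one-state machine and basic rho bounds -/

lemma exists_flat (Γ : Type) [Fintype Γ] [Nonempty Γ] :
    ∃ C : FSC Γ, C.IL ∧ C.states = 1 ∧
      ∀ u : List Γ, (C.output u).length = u.length * Fintype.card Γ := by
  classical
  set G := Fintype.card Γ with hG
  have hGpos : 0 < G := Fintype.card_pos
  set code : List Γ → List Bool :=
    fun l => List.ofFn (fun i : Fin G =>
      decide ((Fintype.equivFin Γ) (l.headD (Classical.arbitrary Γ)) = i)) with hcode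
  have hlen : ∀ l, (code l).length = G := by intro l; simp [hcode]
  obtain ⟨C, hIL, hst, hout⟩ := exists_block_machine 1 (le_refl 1) code
    (fun β _ => by rw [hlen]; omega)
    (by
      intro β γ hβ hγ hne hpre
      obtain ⟨a, rfl⟩ := List.length_eq_one_iff.1 hβ
      obtain ⟨b, rfl⟩ := List.length_eq_one_iff.1 hγ
      have heq : code [a] = code [b] := hpre.eq_of_length (by rw [hlen, hlen])
      rw [hcode] at heq
      simp only [List.headD_cons] at heq
      have h2 := List.ofFn_injective heq
      have h3 := congrFun h2 ((Fintype.equivFin Γ) a)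
      have h4 : (Fintype.equivFin Γ) b = (Fintype.equivFin Γ) a := by
        simpa using h3.symm
      exact hne (by rw [(Fintype.equivFin Γ).injective h4.symm]))
  refine ⟨C, hIL, ?_, ?_⟩
  · rw [hst]
    rw [Fintype.card_eq_one_iff]
    refine ⟨⟨[], by simp⟩, ?_⟩
    rintro ⟨l, hl⟩
    apply Subtype.ext
    show l = []
    exact List.length_eq_zero_iff.1 (by omega)
  · intro u
    rw [hout]
    simp only [Nat.div_one]
    rw [Finset.sum_congr rfl (fun i _ => hlen _), Finset.sum_const, Finset.card_range,
      smul_eq_mul]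

section Rho

variable {k : Type} [Fintype k]

lemma lgK_pos (hk : 2 ≤ Fintype.card k) : 0 < Real.logb 2 (Fintype.card k) :=
  Real.logb_pos one_lt_two (by exact_mod_cast hk)

lemma one_le_lgK' (hk : 2 ≤ Fintype.card k) : 1 ≤ Real.logb 2 (Fintype.card k) := by
  have := Real.logb_le_logb_of_le (one_lt_two) (by norm_num : (0:ℝ) < 2)
    (by exact_mod_cast hk : (2:ℝ) ≤ (Fintype.card k : ℝ))
  rwa [Real.logb_self_eq_one one_lt_two] at this

lemma ratio_nonneg (hk : 2 ≤ Fintype.card k) (a n : ℕ) :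
    0 ≤ (a : ℝ) / (n * Real.logb 2 (Fintype.card k)) := by
  apply div_nonneg (by positivity)
  exact mul_nonneg (by positivity) (le_of_lt (lgK_pos hk))

lemma rhoFS_nonneg (hk : 2 ≤ Fintype.card k) (t : ℕ) (u : List k) : 0 ≤ rhoFS k t u := by
  apply Real.sInf_nonneg
  rintro x ⟨C, -, -, rfl⟩
  exact ratio_nonneg hk _ _

lemma rhoFSJoint_nonneg (hk : 2 ≤ Fintype.card k) (r : ℕ) (u w : List k) :
    0 ≤ rhoFSJoint k r u w := by
  apply Real.sInf_nonneg
  rintro x ⟨C, -, -, rfl⟩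
  exact ratio_nonneg hk _ _

lemma rhoFS_le (hk : 2 ≤ Fintype.card k) {t : ℕ} {C : FSC k} (hC : C.IL)
    (hs : C.states ≤ t) (u : List k) :
    rhoFS k t u ≤ ((C.output u).length : ℝ) / (u.length * Real.logb 2 (Fintype.card k)) := by
  obtain ⟨C', h1, h2, h3⟩ := exists_pad C hC hs
  apply csInf_le
  · exact ⟨0, by rintro x ⟨D, -, -, rfl⟩; exact ratio_nonneg hk _ _⟩
  · exact ⟨C', h1, h2, by rw [h3]⟩

lemma rhoFSJoint_le (hk : 2 ≤ Fintype.card k) {r : ℕ} {C : FSC (k × k)} (hC : C.IL)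
    (hs : C.states ≤ r) (u w : List k) :
    rhoFSJoint k r u w
      ≤ ((C.output (u.zip w)).length : ℝ) / (u.length * Real.logb 2 (Fintype.card k)) := by
  obtain ⟨C', h1, h2, h3⟩ := exists_pad C hC hs
  apply csInf_le
  · exact ⟨0, by rintro x ⟨D, -, -, rfl⟩; exact ratio_nonneg hk _ _⟩
  · exact ⟨C', h1, h2, by rw [h3]⟩

lemma one_le_lgK (hk : 2 ≤ Fintype.card k) : 1 ≤ Real.logb 2 (Fintype.card k) :=
  one_le_lgK' hk

lemma flat_ratio_le (hk : 2 ≤ Fintype.card k) (n G : ℕ) (hG1 : (0:ℝ) ≤ G) :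
    ((n * G : ℕ) : ℝ) / (n * Real.logb 2 (Fintype.card k)) ≤ (G : ℝ) := by
  rcases Nat.eq_zero_or_pos n with rfl | hn
  · simp
  · have hL := one_le_lgK' hk
    rw [Nat.cast_mul, mul_div_mul_left _ _ (by exact_mod_cast hn.ne' : (n:ℝ) ≠ 0)]
    exact div_le_self hG1 hL

lemma rhoFS_le_card (hk : 2 ≤ Fintype.card k) {t : ℕ} (ht : 1 ≤ t) (u : List k) :
    rhoFS k t u ≤ (Fintype.card k : ℝ) := by
  have hne : Nonempty k := Fintype.card_pos_iff.1 (by omega)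
  obtain ⟨C, h1, h2, h3⟩ := exists_flat k
  refine le_trans (rhoFS_le hk h1 (by omega : C.states ≤ t) u) ?_
  rw [h3]
  exact flat_ratio_le hk _ _ (by positivity)

lemma rhoFSJoint_le_sq (hk : 2 ≤ Fintype.card k) (r : ℕ) (u w : List k)
    (hlen : u.length = w.length) :
    rhoFSJoint k r u w ≤ (Fintype.card k : ℝ) ^ 2 := by
  rcases Nat.eq_zero_or_pos r with rfl | hr
  · have : {x : ℝ | ∃ C : FSC (k × k), C.IL ∧ C.states = 0 ∧
        x = ((C.output (u.zip w)).length : ℝ) / (u.length * Real.logb 2 (Fintype.card k))} = ∅ := by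
      ext x
      simp only [Set.mem_setOf_eq, Set.mem_empty_iff_false, iff_false, not_exists]
      rintro C ⟨-, h0, -⟩
      have := C.states_pos
      omega
    rw [rhoFSJoint, this, Real.sInf_empty]
    positivity
  · have hne : Nonempty k := Fintype.card_pos_iff.1 (by omega)
    obtain ⟨C, h1, h2, h3⟩ := exists_flat (k × k)
    refine le_trans (rhoFSJoint_le hk h1 (by omega : C.states ≤ r) u w) ?_
    rw [h3]
    have hzlen : (u.zip w).length = u.length := by
      rw [List.length_zip, hlen, min_self]
    rw [hzlen, Fintype.card_prod]
    have := flat_ratio_le hk u.length (Fintype.card k * Fintype.card k) (by positivity)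
    refine le_trans this ?_
    rw [Nat.cast_mul]
    exact le_of_eq (sq (Fintype.card k : ℝ)).symm

lemma rhoFS_zero (hk : 2 ≤ Fintype.card k) (u : List k) : rhoFS k 0 u = 0 := by
  have hempty : {x : ℝ | ∃ C : FSC k, C.IL ∧ C.states = 0 ∧
      x = ((C.output u).length : ℝ) / (u.length * Real.logb 2 (Fintype.card k))} = ∅ := by
    ext x
    simp only [Set.mem_setOf_eq, Set.mem_empty_iff_false, iff_false, not_exists]
    rintro C ⟨-, h0, -⟩
    have := C.states_pos
    omega
  rw [rhoFS, hempty, Real.sInf_empty]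

lemma rhoFS_anti (hk : 2 ≤ Fintype.card k) {t t' : ℕ} (h1 : 1 ≤ t) (h : t ≤ t')
    (u : List k) : rhoFS k t' u ≤ rhoFS k t u := by
  have hne : Nonempty k := Fintype.card_pos_iff.1 (by omega)
  obtain ⟨C, hC1, hC2, hC3⟩ := exists_flat k
  obtain ⟨C', g1, g2, g3⟩ := exists_pad C hC1 (by omega : C.states ≤ t)
  refine le_csInf ⟨((C'.output u).length : ℝ) / (u.length * Real.logb 2 (Fintype.card k)),
    C', g1, g2, rfl⟩ ?_
  rintro x ⟨D, h1, h2, rfl⟩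
  exact rhoFS_le hk h1 (by omega) u

lemma rhoFSJoint_anti (hk : 2 ≤ Fintype.card k) {r r' : ℕ} (h1 : 1 ≤ r) (h : r ≤ r')
    (u w : List k) : rhoFSJoint k r' u w ≤ rhoFSJoint k r u w := by
  have hne : Nonempty k := Fintype.card_pos_iff.1 (by omega)
  obtain ⟨C, hC1, hC2, hC3⟩ := exists_flat (k × k)
  obtain ⟨C', g1, g2, g3⟩ := exists_pad C hC1 (by omega : C.states ≤ r)
  refine le_csInf ⟨((C'.output (u.zip w)).length : ℝ) / (u.length * Real.logb 2 (Fintype.card k)),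
    C', g1, g2, rfl⟩ ?_
  rintro x ⟨D, h1, h2, rfl⟩
  exact rhoFSJoint_le hk h1 (by omega) u w

lemma rhoFSJoint_ge (hk : 2 ≤ Fintype.card k) {r : ℕ} (hr : 1 ≤ r) (u w : List k)
    (b : ℝ)
    (hb : ∀ D : FSC (k × k), D.IL → D.states = r →
      b ≤ ((D.output (u.zip w)).length : ℝ) / (u.length * Real.logb 2 (Fintype.card k))) :
    b ≤ rhoFSJoint k r u w := by
  have hne : Nonempty k := Fintype.card_pos_iff.1 (by omega)
  obtain ⟨C, hC1, hC2, hC3⟩ := exists_flat (k × k)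
  obtain ⟨C', g1, g2, g3⟩ := exists_pad C hC1 (by omega : C.states ≤ r)
  refine le_csInf ⟨((C'.output (u.zip w)).length : ℝ) / (u.length * Real.logb 2 (Fintype.card k)),
    C', g1, g2, rfl⟩ ?_
  rintro x ⟨D, h1, h2, rfl⟩
  exact hb D h1 h2

end Rho

/-! ### lower bound for arbitrary IL compressors -/

lemma kraft_sum_bound {Γ : Type} [Fintype Γ] (D : FSC Γ) (hD : D.IL) (m : ℕ)
    (T : Finset (D.Q × List Γ))
    (hreach : ∀ κ ∈ T, ∃ p, D.runFrom D.q0 p = κ.1)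
    (hlen : ∀ κ ∈ T, κ.2.length = m) :
    ∑ κ ∈ T, ((2:ℝ) ^ (min (m * Fintype.card Γ) (D.outFrom κ.1 κ.2).length))⁻¹
      ≤ (D.states : ℝ) ^ 2 * (m * Fintype.card Γ + 2) := by
  classical
  set G := Fintype.card Γ with hG
  set r := D.states with hr
  have hrpos : 1 ≤ r := D.states_pos
  set L := m * G with hL
  set ℓf : D.Q × List Γ → ℕ := fun κ => min L (D.outFrom κ.1 κ.2).length with hℓf
  have hmem : ∀ κ ∈ T, ℓf κ ∈ Finset.range (L+1) := by
    intro κ _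
    apply Finset.mem_range.2
    have : ℓf κ ≤ L := min_le_left _ _
    omega
  rw [← Finset.sum_fiberwise_of_maps_to hmem (fun κ => ((2:ℝ) ^ ℓf κ)⁻¹)]
  have hbound : ∀ ℓ ∈ Finset.range (L+1),
      ∑ κ ∈ T.filter (fun κ => ℓf κ = ℓ), ((2:ℝ) ^ ℓf κ)⁻¹ ≤ (r:ℝ)^2 := by
    intro ℓ hℓ
    have hterm : ∀ κ ∈ T.filter (fun κ => ℓf κ = ℓ), ((2:ℝ) ^ ℓf κ)⁻¹ = ((2:ℝ)^ℓ)⁻¹ :=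
      fun κ hκ => by rw [(Finset.mem_filter.1 hκ).2]
    rw [Finset.sum_congr rfl hterm, Finset.sum_const, nsmul_eq_mul]
    have hpow2 : (0:ℝ) < (2:ℝ)^ℓ := by positivity
    by_cases hcase : ℓ < L
    · have hcard : (T.filter (fun κ => ℓf κ = ℓ)).card ≤ r * 2^ℓ * r := by
        have hinj := Finset.card_le_card_of_injOn
          (s := T.filter (fun κ => ℓf κ = ℓ)) (t := Finset.univ)
          (fun κ : D.Q × List Γ =>
            (κ.1, (fun i : Fin ℓ => (D.outFrom κ.1 κ.2).getD i false), D.runFrom κ.1 κ.2))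
          (fun κ _ => Finset.mem_univ _) ?_
        · refine le_trans hinj ?_
          rw [Finset.card_univ]
          simp only [Fintype.card_prod, Fintype.card_fun, Fintype.card_fin, Fintype.card_bool]
          rw [hr]
          rw [FSC.states]
          ring_nf
          omega
        · rintro ⟨q1, β1⟩ h1 ⟨q2, β2⟩ h2 heq
          rw [Finset.mem_coe, Finset.mem_filter] at h1 h2
          obtain ⟨hT1, hv1⟩ := h1
          obtain ⟨hT2, hv2⟩ := h2
          simp only [Prod.mk.injEq] at heq
          obtain ⟨hq, hpad, hrunq⟩ := heq
          subst hq
          have hlen1 : (D.outFrom q1 β1).length = ℓ := by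
            simp only [hℓf] at hv1
            omega
          have hlen2 : (D.outFrom q1 β2).length = ℓ := by
            simp only [hℓf] at hv2
            omega
          have houteq : D.outFrom q1 β1 = D.outFrom q1 β2 := by
            apply List.ext_getElem (by rw [hlen1, hlen2])
            intro i hi1 hi2
            have hcf := congrFun hpad ⟨i, by omega⟩
            simp only at hcf
            rwa [List.getD_eq_getElem _ _ (by omega), List.getD_eq_getElem _ _ (by omega)] at hcf
          obtain ⟨p, hp⟩ := hreach (q1, β1) hT1
          have hinj2 : β1 = β2 := by
            apply FSC.il_inj_from hD p
            · rw [hp]; exact houteq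
            · rw [hp]; exact hrunq
          rw [hinj2]
      calc ((T.filter (fun κ => ℓf κ = ℓ)).card : ℝ) * ((2:ℝ)^ℓ)⁻¹
          ≤ ((r * 2^ℓ * r : ℕ) : ℝ) * ((2:ℝ)^ℓ)⁻¹ := by
            apply mul_le_mul_of_nonneg_right _ (by positivity)
            exact_mod_cast hcard
        _ = (r:ℝ)^2 := by
            push_cast
            field_simp
    · -- ℓ = L
      have hTcard : T.card ≤ r * (G+1)^m := by
        have hinj := Finset.card_le_card_of_injOn
          (s := T) (t := Finset.univ)
          (fun κ : D.Q × List Γ => (κ.1, fun i : Fin m => κ.2[(i:ℕ)]?))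
          (fun κ _ => Finset.mem_univ _) ?_
        · refine le_trans hinj ?_
          rw [Finset.card_univ]
          simp only [Fintype.card_prod, Fintype.card_fun, Fintype.card_fin,
            Fintype.card_option]
          rw [hr, FSC.states]
        · rintro ⟨q1, β1⟩ h1 ⟨q2, β2⟩ h2 heq
          rw [Finset.mem_coe] at h1 h2
          simp only [Prod.mk.injEq] at heq
          obtain ⟨hq, hpad⟩ := heq
          subst hq
          have hl1 : β1.length = m := hlen _ h1
          have hl2 : β2.length = m := hlen _ h2
          have : β1 = β2 := by
            apply List.ext_getElem?
            intro i
            by_cases hi : i < m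
            · exact congrFun hpad ⟨i, hi⟩
            · rw [List.getElem?_eq_none (by omega), List.getElem?_eq_none (by omega)]
          rw [this]
      have hGm : ((G+1)^m : ℝ) ≤ (2:ℝ)^L := by
        have h1 : (G+1)^m ≤ (2^G)^m :=
          Nat.pow_le_pow_left (Nat.succ_le_of_lt (Nat.lt_two_pow_self (n := G))) m
        have h2 : (2^G)^m = 2^L := by rw [← pow_mul, hL, Nat.mul_comm]
        exact_mod_cast h1.trans_eq h2
      have hfle : (T.filter (fun κ => ℓf κ = ℓ)).card ≤ T.card := Finset.card_filter_le _ _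
      have hLeq : ℓ = L := by
        have := Finset.mem_range.1 hℓ
        omega
      rw [← hLeq] at hGm
      calc ((T.filter (fun κ => ℓf κ = ℓ)).card : ℝ) * ((2:ℝ)^ℓ)⁻¹
          ≤ ((r : ℝ) * (2:ℝ)^ℓ) * ((2:ℝ)^ℓ)⁻¹ := by
            apply mul_le_mul_of_nonneg_right _ (by positivity)
            calc ((T.filter (fun κ => ℓf κ = ℓ)).card : ℝ) ≤ (T.card : ℝ) := by exact_mod_cast hfle
              _ ≤ ((r * (G+1)^m : ℕ) : ℝ) := by exact_mod_cast hTcard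
              _ = (r:ℝ) * ((G+1)^m : ℝ) := by push_cast; ring
              _ ≤ (r:ℝ) * (2:ℝ)^ℓ := by
                  apply mul_le_mul_of_nonneg_left hGm (by positivity)
        _ = (r:ℝ) := by field_simp
        _ ≤ (r:ℝ)^2 := by
            have h1 : (1:ℝ) ≤ (r:ℝ) := by exact_mod_cast hrpos
            nlinarith
  refine le_trans (Finset.sum_le_sum hbound) ?_
  rw [Finset.sum_const, Finset.card_range, nsmul_eq_mul]
  have h1 : ((L + 1 : ℕ) : ℝ) ≤ (m : ℝ) * (G:ℝ) + 2 := by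
    push_cast [hL]
    linarith
  calc ((L + 1 : ℕ):ℝ) * (r:ℝ)^2 ≤ ((m:ℝ) * (G:ℝ) + 2) * (r:ℝ)^2 := by
        apply mul_le_mul_of_nonneg_right h1 (by positivity)
    _ = (r:ℝ)^2 * ((m:ℝ) * (G:ℝ) + 2) := by ring

lemma out_blocks_le {Γ : Type} (D : FSC Γ) (m : ℕ) (z : List Γ) :
    ∑ i ∈ Finset.range (z.length / m),
      (D.outFrom (D.runFrom D.q0 (z.take (i*m))) (blk m z i)).length
    ≤ (D.output z).length := by
  have aux : ∀ i, i ≤ z.length / m →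
      (D.outFrom D.q0 (z.take (i*m))).length
        = ∑ j ∈ Finset.range i,
            (D.outFrom (D.runFrom D.q0 (z.take (j*m))) (blk m z j)).length := by
    intro i
    induction i with
    | zero =>
      intro _
      rw [Nat.zero_mul, List.take_zero]
      simp [FSC.outFrom]
    | succ i ih =>
      intro hi
      have htake : z.take ((i+1)*m) = z.take (i*m) ++ blk m z i := by
        have he : (i+1)*m = i*m + m := by ring
        rw [he, List.take_add]
        rfl
      rw [htake, FSC.outFrom_append, List.length_append, ih (by omega),
        Finset.sum_range_succ]
  have h1 := aux (z.length / m) (le_refl _)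
  have hsplit : z.take ((z.length / m)*m) ++ z.drop ((z.length / m)*m) = z :=
    List.take_append_drop _ _
  rw [← h1]
  show _ ≤ (D.outFrom D.q0 z).length
  conv_rhs => rw [← hsplit]
  rw [FSC.outFrom_append, List.length_append]
  omega

lemma lower_bound {Γ : Type} [Fintype Γ] (D : FSC Γ) (hD : D.IL) (m : ℕ) (hm : 1 ≤ m)
    (z : List Γ) :
    Hsum m z - (z.length / m : ℕ) *
        (lg (D.states) + lg ((D.states : ℝ) ^ 2 * (m * Fintype.card Γ + 2)))
      ≤ ((D.output z).length : ℝ) := by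
  classical
  set G := Fintype.card Γ with hG
  set r := D.states with hr
  have hrpos : 1 ≤ r := D.states_pos
  set N := z.length / m with hN
  set s := Finset.range N with hs
  set key : ℕ → D.Q × List Γ := fun i => (D.runFrom D.q0 (z.take (i*m)), blk m z i) with hkey
  set L := m * G with hL
  set A : ℝ := (r:ℝ)^2 * ((m:ℝ) * (G:ℝ) + 2) with hA
  have hApos : 0 < A := by
    rw [hA]
    have : (0:ℝ) < (r:ℝ) := by exact_mod_cast hrpos
    positivity
  have hlgr : 0 ≤ lg (r:ℝ) := lg_nonneg (by exact_mod_cast hrpos)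
  -- Kraft bound for the occurring keys
  have hkraft : ∑ x ∈ s.image key,
      ((2:ℝ) ^ (min (m * Fintype.card Γ) (D.outFrom x.1 x.2).length))⁻¹ ≤ A := by
    rw [hA, hr]
    apply kraft_sum_bound D hD m
    · intro κ hκ
      obtain ⟨i, hi, rfl⟩ := Finset.mem_image.1 hκ
      exact ⟨z.take (i*m), rfl⟩
    · intro κ hκ
      obtain ⟨i, hi, rfl⟩ := Finset.mem_image.1 hκ
      exact blk_length (by rw [← hN]; exact Finset.mem_range.1 (by rwa [← hs]))
  -- occ_gibbs
  have hoc := occ_gibbs s key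
    (fun κ => ((2:ℝ) ^ (min (m * Fintype.card Γ) (D.outFrom κ.1 κ.2).length))⁻¹)
    A hApos (fun i _ => by positivity) hkraft
  have hscard : (s.card : ℝ) = (N : ℝ) := by rw [hs, Finset.card_range]
  -- identify lg (1/q) with the truncated lengths
  have hlgq : ∀ i ∈ s,
      lg (1 / ((2:ℝ) ^ (min (m * Fintype.card Γ) (D.outFrom (key i).1 (key i).2).length))⁻¹)
        = ((min (m * Fintype.card Γ) (D.outFrom (key i).1 (key i).2).length : ℕ) : ℝ) := by
    intro i _
    rw [one_div, inv_inv, lg_npow]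
  -- sum of truncated lengths is at most the output length
  have hsum_trunc : ∑ i ∈ s,
      ((min (m * Fintype.card Γ) (D.outFrom (key i).1 (key i).2).length : ℕ) : ℝ)
        ≤ ((D.output z).length : ℝ) := by
    have h2 : ∑ i ∈ s, min (m * Fintype.card Γ) (D.outFrom (key i).1 (key i).2).length
        ≤ ∑ i ∈ s, (D.outFrom (key i).1 (key i).2).length :=
      Finset.sum_le_sum (fun i _ => min_le_right _ _)
    have h3 := out_blocks_le D m z
    have h4 : (∑ i ∈ s, min (m * Fintype.card Γ) (D.outFrom (key i).1 (key i).2).length : ℕ)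
        ≤ (D.output z).length := le_trans h2 (by rw [hs, hN]; exact h3)
    calc ∑ i ∈ s, ((min (m * Fintype.card Γ) (D.outFrom (key i).1 (key i).2).length : ℕ) : ℝ)
        = ((∑ i ∈ s, min (m * Fintype.card Γ) (D.outFrom (key i).1 (key i).2).length : ℕ) : ℝ) := by
          push_cast
          rfl
      _ ≤ ((D.output z).length : ℝ) := by exact_mod_cast h4
  -- Hsum ≤ sum over the finer partition
  have hfine : Hsum m z ≤ ∑ i ∈ s,
      lg ((s.card : ℝ) / ((s.filter (fun j => key j = key i)).card : ℝ)) := by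
    rw [Hsum, ← hN, ← hs]
    apply Finset.sum_le_sum
    intro i hi
    have hiN : i < N := by rw [hs] at hi; exact Finset.mem_range.1 hi
    have hd_pos : 0 < (s.filter (fun j => key j = key i)).card :=
      Finset.card_pos.2 ⟨i, Finset.mem_filter.2 ⟨hi, rfl⟩⟩
    have hd_le : (s.filter (fun j => key j = key i)).card ≤ cnt m z (blk m z i) := by
      rw [cnt_eq, ← hN, ← hs]
      apply Finset.card_le_card
      intro j hj
      obtain ⟨hj1, hj2⟩ := Finset.mem_filter.1 hj
      refine Finset.mem_filter.2 ⟨hj1, ?_⟩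
      have := congrArg Prod.snd hj2
      simpa [hkey] using this
    rw [hscard]
    apply lg_mono
    · apply div_pos
      · exact_mod_cast Nat.pos_of_ne_zero (by omega)
      · exact_mod_cast cnt_pos (show i < z.length / m by rw [← hN]; exact hiN)
    · apply div_le_div_of_nonneg_left (by positivity)
      · exact_mod_cast hd_pos
      · exact_mod_cast hd_le
  -- combine
  have hmain : Hsum m z ≤ ((D.output z).length : ℝ) + (N:ℝ) * lg A := by
    calc Hsum m z ≤ ∑ i ∈ s, lg ((s.card : ℝ) / ((s.filter (fun j => key j = key i)).card : ℝ)) := hfine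
      _ ≤ (∑ i ∈ s,
            lg (1 / ((2:ℝ) ^ (min (m * Fintype.card Γ) (D.outFrom (key i).1 (key i).2).length))⁻¹))
          + s.card * lg A := hoc
      _ = (∑ i ∈ s,
            ((min (m * Fintype.card Γ) (D.outFrom (key i).1 (key i).2).length : ℕ) : ℝ))
          + (N:ℝ) * lg A := by rw [Finset.sum_congr rfl hlgq, hscard]
      _ ≤ ((D.output z).length : ℝ) + (N:ℝ) * lg A := by linarith [hsum_trunc]
  have hlgA : lg A ≤ lg (r:ℝ) + lg A := by linarith
  have hNn : (0:ℝ) ≤ (N:ℝ) := by positivity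
  have : (N:ℝ) * lg A ≤ (N:ℝ) * (lg (r:ℝ) + lg A) := by
    apply mul_le_mul_of_nonneg_left hlgA hNn
  have hfin : Hsum m z - (N:ℝ) * (lg (r:ℝ) + lg A) ≤ ((D.output z).length : ℝ) := by
    linarith
  exact hfin

/-! ### upper bound: Shannon-Fano block coding -/

noncomputable instance fintypeListEq (Γ : Type) [Fintype Γ] (m : ℕ) :
    Fintype {l : List Γ // l.length = m} := by
  classical
  exact Fintype.ofSurjective (fun g : Fin m → Γ => ⟨List.ofFn g, by simp⟩)
    (by
      rintro ⟨l, rfl⟩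
      exact ⟨l.get, Subtype.ext (List.ofFn_get l)⟩)

lemma card_listEq_le (Γ : Type) [Fintype Γ] (m : ℕ) :
    Fintype.card {l : List Γ // l.length = m} ≤ Fintype.card Γ ^ m := by
  classical
  have hsurj : Function.Surjective
      (fun g : Fin m → Γ => (⟨List.ofFn g, by simp⟩ : {l : List Γ // l.length = m})) := by
    rintro ⟨l, rfl⟩
    exact ⟨l.get, Subtype.ext (List.ofFn_get l)⟩
  have h1 := Fintype.card_le_of_surjective _ hsurj
  simpa [Fintype.card_fun] using h1

lemma upper_bound {Γ : Type} [Fintype Γ] [Nonempty Γ] (m : ℕ) (hm : 1 ≤ m) (w : List Γ) :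
    ∃ C : FSC Γ, C.IL ∧ C.states = Fintype.card {l : List Γ // l.length < m} ∧
      ((C.output w).length : ℝ) ≤ Hsum m w + 3 * (w.length / m : ℕ) := by
  classical
  set G := Fintype.card Γ with hG
  have hGpos : 0 < G := Fintype.card_pos
  set N := w.length / m with hN
  set q : {l : List Γ // l.length = m} → ℕ :=
    fun β => (2 * N + cnt m w β.1 - 1) / cnt m w β.1 with hq
  set ℓ : {l : List Γ // l.length = m} → ℕ :=
    fun β => if 0 < cnt m w β.1 then Nat.clog 2 (q β) else m * G + 1 with hℓ
  -- facts about occurring blocks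
  have hocc : ∀ β : {l : List Γ // l.length = m}, 0 < cnt m w β.1 →
      2 ≤ q β ∧ 2 * N ≤ cnt m w β.1 * 2 ^ Nat.clog 2 (q β) ∧
        2 ^ Nat.clog 2 (q β) < 2 * q β := by
    intro β hc
    have hcN : cnt m w β.1 ≤ N := by rw [hN]; exact cnt_le m w β.1
    have hN1 : 1 ≤ N := le_trans hc hcN
    have hq2 : 2 ≤ q β := by
      rw [hq]
      rw [Nat.le_div_iff_mul_le hc]
      omega
    have hqc : 2 * N ≤ cnt m w β.1 * q β := by
      have hqdef : q β = (2 * N + cnt m w β.1 - 1) / cnt m w β.1 := rfl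
      have hdm := Nat.div_add_mod (2 * N + cnt m w β.1 - 1) (cnt m w β.1)
      have hml := Nat.mod_lt (2 * N + cnt m w β.1 - 1) hc
      obtain ⟨P, hP⟩ : ∃ P, cnt m w β.1 * ((2 * N + cnt m w β.1 - 1) / cnt m w β.1) = P :=
        ⟨_, rfl⟩
      rw [hqdef, hP]
      rw [hP] at hdm
      omega
    have hpow : q β ≤ 2 ^ Nat.clog 2 (q β) := Nat.le_pow_clog one_lt_two _
    have hclog1 : 0 < Nat.clog 2 (q β) := Nat.clog_pos one_lt_two hq2
    have hlt : 2 ^ (Nat.clog 2 (q β)).pred < q β := Nat.pow_pred_clog_lt_self one_lt_two hq2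
    have hsucc : 2 ^ Nat.clog 2 (q β) = 2 * 2 ^ (Nat.clog 2 (q β)).pred := by
      conv_lhs => rw [← Nat.succ_pred_eq_of_pos hclog1]
      rw [pow_succ']
    refine ⟨hq2, ?_, ?_⟩
    · calc 2 * N ≤ cnt m w β.1 * q β := hqc
        _ ≤ cnt m w β.1 * 2 ^ Nat.clog 2 (q β) := Nat.mul_le_mul_left _ hpow
    · calc 2 ^ Nat.clog 2 (q β) = 2 * 2 ^ (Nat.clog 2 (q β)).pred := hsucc
        _ < 2 * q β := by omega
  -- Kraft condition
  have hkraft : ∑ β : {l : List Γ // l.length = m}, ((2:ℝ) ^ ℓ β)⁻¹ ≤ 1 := by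
    rw [← Finset.sum_filter_add_sum_filter_not Finset.univ
      (fun β : {l : List Γ // l.length = m} => 0 < cnt m w β.1)]
    have hpart1 : ∑ β ∈ Finset.univ.filter
        (fun β : {l : List Γ // l.length = m} => 0 < cnt m w β.1), ((2:ℝ) ^ ℓ β)⁻¹
        ≤ 1/2 := by
      rcases Nat.eq_zero_or_pos N with hN0 | hNpos
      · have : Finset.univ.filter
            (fun β : {l : List Γ // l.length = m} => 0 < cnt m w β.1) = ∅ := by
          apply Finset.filter_false_of_mem
          intro β _
          have := cnt_le m w β.1
          rw [← hN] at this
          omega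
        rw [this, Finset.sum_empty]
        norm_num
      · have hterm : ∀ β ∈ Finset.univ.filter
            (fun β : {l : List Γ // l.length = m} => 0 < cnt m w β.1),
            ((2:ℝ) ^ ℓ β)⁻¹ ≤ (cnt m w β.1 : ℝ) / (2 * N) := by
          intro β hβ
          have hc := (Finset.mem_filter.1 hβ).2
          obtain ⟨hq2, hqc, _⟩ := hocc β hc
          have hℓβ : ℓ β = Nat.clog 2 (q β) := by rw [hℓ]; simp [hc]
          rw [hℓβ, inv_eq_one_div, div_le_div_iff₀ (by positivity) (by positivity)]
          have : (2 * N : ℝ) ≤ (cnt m w β.1 : ℝ) * (2:ℝ) ^ Nat.clog 2 (q β) := by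
            exact_mod_cast hqc
          linarith
        refine le_trans (Finset.sum_le_sum hterm) ?_
        rw [← Finset.sum_div]
        -- sum of counts over occurring blocks = N
        have hsumcnt : ∑ β ∈ Finset.univ.filter
            (fun β : {l : List Γ // l.length = m} => 0 < cnt m w β.1),
            (cnt m w β.1 : ℝ) = (N : ℝ) := by
          have hbf : ∀ i ∈ Finset.range N, (blk m w i).length = m := by
            intro i hi
            exact blk_length (by rw [← hN]; exact Finset.mem_range.1 hi)
          set bf : ℕ → {l : List Γ // l.length = m} :=
            fun i => if h : i < N then ⟨blk m w i, blk_length (lt_of_lt_of_eq h hN)⟩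
              else ⟨List.replicate m (Classical.arbitrary Γ), by simp⟩ with hbfdef
          have hmaps : ∀ i ∈ Finset.range N, bf i ∈ Finset.univ.filter
              (fun β : {l : List Γ // l.length = m} => 0 < cnt m w β.1) := by
            intro i hi
            have hiN := Finset.mem_range.1 hi
            refine Finset.mem_filter.2 ⟨Finset.mem_univ _, ?_⟩
            rw [hbfdef]
            simp only [hiN, dif_pos]
            exact cnt_pos (by rw [← hN]; exact hiN)
          have hcards := Finset.card_eq_sum_card_fiberwise hmaps
          have hfib : ∀ β ∈ Finset.univ.filter
              (fun β : {l : List Γ // l.length = m} => 0 < cnt m w β.1),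
              ((Finset.range N).filter (fun i => bf i = β)).card = cnt m w β.1 := by
            intro β _
            rw [cnt_eq, ← hN]
            congr 1
            apply Finset.filter_congr
            intro i hi
            have hiN := Finset.mem_range.1 hi
            rw [hbfdef]
            simp only [hiN, dif_pos]
            rw [Subtype.ext_iff]
          rw [Finset.card_range] at hcards
          rw [Finset.sum_congr rfl (fun β hβ => by rw [← hfib β hβ])]
          exact_mod_cast congrArg Nat.cast hcards |>.symm
        rw [hsumcnt]
        rw [div_le_div_iff₀ (by positivity) (by norm_num)]
        push_cast
        linarith
    have hpart2 : ∑ β ∈ Finset.univ.filter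
        (fun β : {l : List Γ // l.length = m} => ¬ 0 < cnt m w β.1), ((2:ℝ) ^ ℓ β)⁻¹
        ≤ 1/2 := by
      have hterm : ∀ β ∈ Finset.univ.filter
          (fun β : {l : List Γ // l.length = m} => ¬ 0 < cnt m w β.1),
          ((2:ℝ) ^ ℓ β)⁻¹ = ((2:ℝ) ^ (m * G + 1))⁻¹ := by
        intro β hβ
        have hc := (Finset.mem_filter.1 hβ).2
        rw [hℓ]
        simp [hc]
      rw [Finset.sum_congr rfl hterm, Finset.sum_const, nsmul_eq_mul]
      have hcard : (Finset.univ.filter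
          (fun β : {l : List Γ // l.length = m} => ¬ 0 < cnt m w β.1)).card ≤ G ^ m := by
        exact le_trans (le_trans (Finset.card_filter_le _ _) (le_of_eq (Finset.card_univ)))
          (card_listEq_le Γ m)
      have hGm : ((G:ℝ)) ^ m ≤ (2:ℝ) ^ (m * G) := by
        have h1 : G ^ m ≤ (2 ^ G) ^ m := Nat.pow_le_pow_left (le_of_lt (Nat.lt_two_pow_self (n := G))) m
        have h2 : (2 ^ G) ^ m = 2 ^ (m * G) := by rw [← pow_mul, Nat.mul_comm]
        exact_mod_cast h1.trans_eq h2
      have hp1 : (0:ℝ) < (2:ℝ) ^ (m * G) := by positivity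
      calc ((Finset.univ.filter
            (fun β : {l : List Γ // l.length = m} => ¬ 0 < cnt m w β.1)).card : ℝ)
            * ((2:ℝ) ^ (m * G + 1))⁻¹
          ≤ (2:ℝ) ^ (m * G) * ((2:ℝ) ^ (m * G + 1))⁻¹ := by
            apply mul_le_mul_of_nonneg_right _ (by positivity)
            calc ((Finset.univ.filter
                (fun β : {l : List Γ // l.length = m} => ¬ 0 < cnt m w β.1)).card : ℝ)
                ≤ ((G ^ m : ℕ) : ℝ) := by exact_mod_cast hcard
              _ = (G:ℝ) ^ m := by push_cast; rfl
              _ ≤ (2:ℝ) ^ (m * G) := hGm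
        _ = 1/2 := by
            rw [pow_succ]
            field_simp
    linarith
  obtain ⟨code0, hclen, hcpre⟩ := kraft ℓ hkraft
  set codeL : List Γ → List Bool :=
    fun l => if h : l.length = m then code0 ⟨l, h⟩ else [] with hcodeL
  have hcodeLlen : ∀ l : List Γ, (h : l.length = m) → (codeL l).length = ℓ ⟨l, h⟩ := by
    intro l h
    rw [hcodeL]
    simp only [h, dif_pos]
    exact hclen _
  obtain ⟨C, hIL, hst, hout⟩ := exists_block_machine m hm codeL
    (by
      intro β hβ
      rw [hcodeLlen β hβ, hℓ]
      by_cases hc : 0 < cnt m w β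
      · simp only [hc, if_pos]
        have hq2 := (hocc ⟨β, hβ⟩ hc).1
        exact Nat.clog_pos one_lt_two hq2
      · simp only [hc, if_neg, not_false_iff]
        omega)
    (by
      intro β γ hβ hγ hne hpre
      rw [hcodeL] at hpre
      simp only [hβ, hγ, dif_pos] at hpre
      exact hcpre ⟨β, hβ⟩ ⟨γ, hγ⟩ (fun hh => hne (congrArg Subtype.val hh)) hpre)
  refine ⟨C, hIL, hst, ?_⟩
  rw [hout]
  -- bound the sum
  have hperblock : ∀ i ∈ Finset.range N,
      ((codeL (blk m w i)).length : ℝ)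
        ≤ lg ((N:ℝ) / (cnt m w (blk m w i) : ℝ)) + 3 := by
    intro i hi
    have hiN := Finset.mem_range.1 hi
    have hblen : (blk m w i).length = m := blk_length (by rw [← hN]; exact hiN)
    have hc : 0 < cnt m w (blk m w i) := cnt_pos (by rw [← hN]; exact hiN)
    have hcN : cnt m w (blk m w i) ≤ N := by rw [hN]; exact cnt_le m w _
    have hN1 : 1 ≤ N := le_trans hc hcN
    obtain ⟨hq2, hqc, hlt⟩ := hocc ⟨blk m w i, hblen⟩ hc
    rw [hcodeLlen _ hblen, hℓ]
    simp only [hc, if_pos]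
    -- clog ≤ lg (2 q) and q ≤ 3N/c
    have hp1 : (0:ℝ) < (2:ℝ) ^ Nat.clog 2 (q ⟨blk m w i, hblen⟩) := by positivity
    have hstep1 : ((Nat.clog 2 (q ⟨blk m w i, hblen⟩) : ℕ) : ℝ)
        ≤ lg (2 * (q ⟨blk m w i, hblen⟩ : ℝ)) := by
      rw [← lg_npow (Nat.clog 2 (q ⟨blk m w i, hblen⟩))]
      apply lg_mono hp1
      have : (2:ℕ) ^ Nat.clog 2 (q ⟨blk m w i, hblen⟩) ≤ 2 * q ⟨blk m w i, hblen⟩ := le_of_lt hlt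
      exact_mod_cast this
    refine le_trans hstep1 ?_
    have hq3N : (q ⟨blk m w i, hblen⟩ : ℝ) ≤ 3 * (N:ℝ) / (cnt m w (blk m w i) : ℝ) := by
      have hqdef : q ⟨blk m w i, hblen⟩
          = (2 * N + cnt m w (blk m w i) - 1) / cnt m w (blk m w i) := rfl
      rw [hqdef]
      refine le_trans (Nat.cast_div_le) ?_
      have h10 : 2 * N + cnt m w (blk m w i) - 1 ≤ 3 * N := by omega
      have h9 : ((2 * N + cnt m w (blk m w i) - 1 : ℕ) : ℝ) ≤ ((3 * N : ℕ) : ℝ) := by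
        exact_mod_cast h10
      calc ((2 * N + cnt m w (blk m w i) - 1 : ℕ) : ℝ) / (cnt m w (blk m w i) : ℝ)
          ≤ ((3 * N : ℕ) : ℝ) / (cnt m w (blk m w i) : ℝ) :=
            (div_le_div_iff_of_pos_right (by exact_mod_cast hc)).2 h9
        _ = 3 * (N:ℝ) / (cnt m w (blk m w i) : ℝ) := by push_cast; ring
    have hqpos : (0:ℝ) < (q ⟨blk m w i, hblen⟩ : ℝ) := by
      have : (2:ℝ) ≤ (q ⟨blk m w i, hblen⟩ : ℝ) := by exact_mod_cast hq2
      linarith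
    have hcpos : (0:ℝ) < (cnt m w (blk m w i) : ℝ) := by exact_mod_cast hc
    have hNpos : (0:ℝ) < (N:ℝ) := by exact_mod_cast hN1
    have hdivnn : (0:ℝ) ≤ (N:ℝ) / (cnt m w (blk m w i) : ℝ) := by positivity
    have h6 : (2:ℝ) * (q ⟨blk m w i, hblen⟩ : ℝ) ≤ 8 * ((N:ℝ) / (cnt m w (blk m w i) : ℝ)) := by
      have h7 : 3 * (N:ℝ) / (cnt m w (blk m w i) : ℝ)
          = 3 * ((N:ℝ) / (cnt m w (blk m w i) : ℝ)) := by ring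
      rw [h7] at hq3N
      linarith
    refine le_trans (lg_mono (by linarith) h6) ?_
    have h8 : lg (8 * ((N:ℝ) / (cnt m w (blk m w i) : ℝ)))
        = 3 + lg ((N:ℝ) / (cnt m w (blk m w i) : ℝ)) := by
      rw [lg_mul (by norm_num) (by positivity)]
      congr 1
      have : ((8:ℝ)) = (2:ℝ)^(3:ℕ) := by norm_num
      rw [this, lg_npow]
      norm_num
    rw [h8]
    linarith
  calc ((∑ i ∈ Finset.range (w.length / m), (codeL (blk m w i)).length : ℕ) : ℝ)
      = ∑ i ∈ Finset.range N, ((codeL (blk m w i)).length : ℝ) := by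
        rw [← hN]
        push_cast
        rfl
    _ ≤ ∑ i ∈ Finset.range N, (lg ((N:ℝ) / (cnt m w (blk m w i) : ℝ)) + 3) :=
        Finset.sum_le_sum hperblock
    _ = Hsum m w + 3 * (N:ℝ) := by
        rw [Finset.sum_add_distrib, Finset.sum_const, Finset.card_range, Hsum, ← hN]
        push_cast
        ring

end AuxDev
section CoreEst

variable {k : Type} [Fintype k]

/-- finite-string core estimate, `x` is either `u` or `w` -/
lemma core_est [Nonempty k] (hk : 2 ≤ Fintype.card k) {r : ℕ} (hr : 1 ≤ r) {m : ℕ} (hm : 1 ≤ m)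
    {t : ℕ} (ht : Fintype.card {l : List k // l.length < m} ≤ t)
    (u w x : List k) (hlu : u.length = w.length) (hlx : x.length = u.length)
    (hx : Hsum m x ≤ Hsum m (u.zip w)) (hn : m ≤ u.length) :
    rhoFS k t x - rhoFSJoint k r u w
      ≤ (3 + lg r + lg ((r:ℝ)^2 * (m * ((Fintype.card k):ℝ)^2 + 2)))
          / (m * Real.logb 2 (Fintype.card k)) := by
  classical
  have hlgK1 : 1 ≤ Real.logb 2 (Fintype.card k) := one_le_lgK hk
  have hlgKpos : 0 < Real.logb 2 (Fintype.card k) := by linarith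
  set lgK := Real.logb 2 (Fintype.card k) with hlgK
  set K := Fintype.card k with hK
  set n := u.length with hn'
  have hnpos : 0 < n := by omega
  have hnR : (0:ℝ) < n := by exact_mod_cast hnpos
  set N := n / m with hNdef
  have hNpos : 0 < N := Nat.div_pos hn hm
  have hzip : (u.zip w).length = n := by rw [List.length_zip, ← hlu, min_self]
  set A : ℝ := (r:ℝ)^2 * ((m:ℝ) * (K:ℝ)^2 + 2) with hA
  have hr1 : (1:ℝ) ≤ (r:ℝ) := by exact_mod_cast hr
  have hm1 : (1:ℝ) ≤ (m:ℝ) := by exact_mod_cast hm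
  have hK1 : (1:ℝ) ≤ (K:ℝ) := by
    rw [hK]
    exact_mod_cast le_trans (by norm_num) hk
  have hA1 : (1:ℝ) ≤ A := by
    rw [hA]
    have hr2 : (1:ℝ) ≤ (r:ℝ)^2 := by nlinarith
    have hM2 : (2:ℝ) ≤ (m:ℝ) * (K:ℝ)^2 + 2 := by nlinarith
    nlinarith
  have hlgr : 0 ≤ lg (r:ℝ) := lg_nonneg hr1
  have hlgA : 0 ≤ lg A := lg_nonneg hA1
  set B : ℝ := lg (r:ℝ) + lg A with hB
  have hBnn : 0 ≤ B := by rw [hB]; linarith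
  -- upper bound for rhoFS k t x
  have hnonk : Nonempty k := inferInstance
  obtain ⟨C, hC1, hC2, hC3⟩ := upper_bound m hm x
  have hxlen : x.length = n := by rw [hn', hlx]
  have hup : rhoFS k t x ≤ (Hsum m x + 3 * (N:ℝ)) / (n * lgK) := by
    refine le_trans (rhoFS_le hk hC1 (le_trans (le_of_eq hC2) ht) x) ?_
    rw [hxlen]
    apply div_le_div_of_nonneg_right ?_ (by positivity)
    · rw [hxlen, ← hNdef] at hC3
      exact hC3
  -- lower bound for the joint
  have hlow : (Hsum m (u.zip w) - (N:ℝ) * B) / (n * lgK) ≤ rhoFSJoint k r u w := by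
    apply rhoFSJoint_ge hk hr u w
    intro D hD1 hD2
    have hlb := lower_bound D hD1 m hm (u.zip w)
    rw [hzip, hD2] at hlb
    have hcard2 : ((Fintype.card (k × k)) : ℝ) = (K:ℝ)^2 := by
      rw [Fintype.card_prod, hK]
      push_cast
      ring
    rw [hcard2] at hlb
    rw [← hNdef, ← hA, ← hB] at hlb
    rw [← hn']
    exact div_le_div_of_nonneg_right hlb (by positivity)
  -- combine
  have hNmn : (N:ℝ) * m ≤ n := by
    have := Nat.div_mul_le_self n m
    exact_mod_cast this
  have hstep : rhoFS k t x - rhoFSJoint k r u w ≤ ((N:ℝ) * (3 + B)) / (n * lgK) := by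
    have h1 : rhoFS k t x - rhoFSJoint k r u w
        ≤ (Hsum m x + 3 * (N:ℝ)) / (n * lgK) - (Hsum m (u.zip w) - (N:ℝ) * B) / (n * lgK) := by
      linarith
    rw [div_sub_div_same] at h1
    refine le_trans h1 ?_
    apply div_le_div_of_nonneg_right ?_ (by positivity)
    linarith
  refine le_trans hstep ?_
  rw [div_le_div_iff₀ (by positivity) (by positivity)]
  have h3B : 0 ≤ 3 + B := by linarith
  have hkey : (N:ℝ) * (3 + B) * ((m:ℝ) * lgK) = ((N:ℝ) * m) * ((3 + B) * lgK) := by ring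
  have hkey2 : (3 + lg (r:ℝ) + lg A) * ((n:ℝ) * lgK) = (n:ℝ) * ((3 + B) * lgK) := by
    rw [hB]
    ring
  rw [hkey, hkey2]
  apply mul_le_mul_of_nonneg_right hNmn
  positivity

lemma penalty_tendsto (c1 : ℝ) (c2 c3 L : ℝ) (hc2 : 0 < c2) (hc3 : 0 < c3) (hL : 0 < L) :
    Filter.Tendsto (fun m : ℕ => (3 + c1 + lg (c2 * (m * c3 + 2))) / (m * L))
      Filter.atTop (nhds 0) := by
  have hlog2 : (0:ℝ) < Real.log 2 := Real.log_pos one_lt_two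
  have key : ∀ᶠ m : ℕ in Filter.atTop,
      ((3 + c1) / L) * (1 / m) + (1 / (L * Real.log 2)) * (Real.log (c2*c3*m + 2*c2) / m)
        = (3 + c1 + lg (c2 * (m * c3 + 2))) / (m * L) := by
    filter_upwards [Filter.eventually_ge_atTop 1] with m hm
    have hmpos : (0:ℝ) < m := by exact_mod_cast hm
    have harg : c2 * ((m:ℝ) * c3 + 2) = c2*c3*m + 2*c2 := by ring
    rw [lg, Real.logb, harg]
    field_simp
  have t1 : Filter.Tendsto (fun m : ℕ => ((3+c1)/L) * (1/m)) Filter.atTop (nhds 0) := by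
    have h := tendsto_one_div_atTop_nhds_zero_nat (𝕜 := ℝ)
    have := h.const_mul ((3+c1)/L)
    simpa using this
  have t2 : Filter.Tendsto (fun m : ℕ => Real.log (c2*c3*m + 2*c2) / m)
      Filter.atTop (nhds 0) := by
    have hne : (1/(c2*c3) : ℝ) ≠ 0 := by positivity
    have hmain := Real.tendsto_pow_log_div_mul_add_atTop (1/(c2*c3)) (-(2/c3)) 1 hne
    have hcomp : Filter.Tendsto (fun m : ℕ => c2*c3*(m:ℝ) + 2*c2) Filter.atTop Filter.atTop := by
      apply Filter.tendsto_atTop_add_const_right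
      exact Filter.Tendsto.const_mul_atTop (by positivity) tendsto_natCast_atTop_atTop
    have hc := hmain.comp hcomp
    refine Filter.Tendsto.congr ?_ hc
    intro m
    simp only [Function.comp_apply, pow_one]
    congr 1
    field_simp
    ring
  have hsum := t1.add (t2.const_mul (1 / (L * Real.log 2)))
  have hzero : (0:ℝ) + 1 / (L * Real.log 2) * 0 = 0 := by ring
  rw [hzero] at hsum
  exact Filter.Tendsto.congr' key hsum

end CoreEst

section LiminfHelpers

open Filter

lemma bddU {f : ℕ → ℝ} {C : ℝ} (h : ∀ n, f n ≤ C) :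
    IsBoundedUnder (· ≤ ·) atTop f :=
  isBoundedUnder_of ⟨C, h⟩

lemma bddL {f : ℕ → ℝ} {c : ℝ} (h : ∀ n, c ≤ f n) :
    IsBoundedUnder (· ≥ ·) atTop f :=
  isBoundedUnder_of ⟨c, h⟩

lemma myliminf_le_liminf {f g : ℕ → ℝ} (h : ∀ᶠ n in atTop, f n ≤ g n)
    {c C : ℝ} (hf : ∀ n, c ≤ f n) (hg : ∀ n, g n ≤ C) :
    liminf f atTop ≤ liminf g atTop :=
  liminf_le_liminf h (bddL hf) ((bddU hg).isCoboundedUnder_ge)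

lemma myliminf_le {f : ℕ → ℝ} {C : ℝ} (h : ∀ n, f n ≤ C)
    {c : ℝ} (hc : ∀ n, c ≤ f n) : liminf f atTop ≤ C := by
  have h1 : liminf f atTop ≤ liminf (fun _ : ℕ => C) atTop :=
    myliminf_le_liminf (Eventually.of_forall h) hc (fun _ => le_refl C)
  rwa [liminf_const] at h1

lemma le_myliminf {f : ℕ → ℝ} {c : ℝ} (h : ∀ n, c ≤ f n)
    {C : ℝ} (hC : ∀ n, f n ≤ C) : c ≤ liminf f atTop :=
  le_liminf_of_le ((bddU hC).isCoboundedUnder_ge) (Eventually.of_forall h)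

lemma myliminf_add_const (f : ℕ → ℝ) (c : ℝ)
    {lo hi : ℝ} (h1 : ∀ n, lo ≤ f n) (h2 : ∀ n, f n ≤ hi) :
    liminf (fun n => f n + c) atTop = liminf f atTop + c := by
  have h := (OrderIso.addRight c).liminf_apply (f := atTop) (u := f)
    (bddL h1) ((bddU h2).isCoboundedUnder_ge)
    (bddL (f := fun n => f n + c) (fun n => add_le_add_left (h1 n) c))
    ((bddU (f := fun n => f n + c) (fun n => add_le_add_left (h2 n) c)).isCoboundedUnder_ge)
  simpa using h.symm

end LiminfHelpers

section Convergence

open Filter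

variable {k : Type} [Fintype k]

lemma rho_mut_lb (hk : 2 ≤ Fintype.card k) (S T : ℕ → k) (r t n : ℕ) :
    -((Fintype.card k : ℝ)^2) ≤ rhoFSMutual k r t (pre S n) (pre T n) := by
  have h1 := rhoFS_nonneg hk t (pre S n)
  have h2 := rhoFS_nonneg hk t (pre T n)
  have h3 := rhoFSJoint_le_sq hk r (pre S n) (pre T n) (by simp [pre])
  rw [rhoFSMutual]
  linarith

lemma rho_mut_ub (hk : 2 ≤ Fintype.card k) (S T : ℕ → k) (r : ℕ) {t : ℕ} (ht : 1 ≤ t) (n : ℕ) :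
    rhoFSMutual k r t (pre S n) (pre T n) ≤ 2 * (Fintype.card k : ℝ) := by
  have h1 := rhoFS_le_card hk ht (pre S n)
  have h2 := rhoFS_le_card hk ht (pre T n)
  have h3 := rhoFSJoint_nonneg hk r (pre S n) (pre T n)
  rw [rhoFSMutual]
  linarith

lemma dim_conv (hk : 2 ≤ Fintype.card k) (S : ℕ → k) :
    Tendsto (fun t => Filter.atTop.liminf fun n => rhoFS k t (pre S n)) atTop
      (nhds (⨅ s : ℕ, Filter.atTop.liminf fun n => rhoFS k (s+1) (pre S n))) := by
  rw [← tendsto_add_atTop_iff_nat 1]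
  apply tendsto_atTop_ciInf
  · intro s s' hss'
    apply myliminf_le_liminf (Eventually.of_forall fun n =>
        rhoFS_anti hk (by omega) (by omega) (pre S n))
      (fun n => rhoFS_nonneg hk _ _) (fun n => rhoFS_le_card hk (by omega) _)
  · refine ⟨0, ?_⟩
    rintro x ⟨s, rfl⟩
    exact le_myliminf (fun n => rhoFS_nonneg hk _ _) (fun n => rhoFS_le_card hk (by omega) _)

lemma mut_conv (hk : 2 ≤ Fintype.card k) (S T : ℕ → k) (r : ℕ) :
    Tendsto (fun t => Filter.atTop.liminf fun n => rhoFSMutual k r t (pre S n) (pre T n)) atTop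
      (nhds (⨅ s : ℕ,
        Filter.atTop.liminf fun n => rhoFSMutual k r (s+1) (pre S n) (pre T n))) := by
  rw [← tendsto_add_atTop_iff_nat 1]
  apply tendsto_atTop_ciInf
  · intro s s' hss'
    apply myliminf_le_liminf (Eventually.of_forall fun n => ?_)
      (fun n => rho_mut_lb hk S T r (s'+1) n) (fun n => rho_mut_ub hk S T r (by omega) n)
    have h1 := rhoFS_anti hk (show 1 ≤ s+1 by omega) (show s+1 ≤ s'+1 by omega) (pre S n)
    have h2 := rhoFS_anti hk (show 1 ≤ s+1 by omega) (show s+1 ≤ s'+1 by omega) (pre T n)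
    rw [rhoFSMutual, rhoFSMutual]
    linarith
  · refine ⟨-((Fintype.card k : ℝ)^2), ?_⟩
    rintro x ⟨s, rfl⟩
    exact le_myliminf (fun n => rho_mut_lb hk S T r (s+1) n)
      (fun n => rho_mut_ub hk S T r (by omega) n)

end Convergence

/-- `mdim_FS(S:T) ≤ min{dim_FS(S), dim_FS(T)}`. -/
theorem mdimFS_le_min {k : Type} [Fintype k] (hk : 2 ≤ Fintype.card k)
    (S T : ℕ → k) :
    mdimFS k S T ≤ min (dimFS k S) (dimFS k T) := by
  classical
  have hne : Nonempty k := Fintype.card_pos_iff.1 (by omega)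
  set K := Fintype.card k with hK
  have hlgK1 : 1 ≤ Real.logb 2 K := one_le_lgK hk
  have hlgKpos : 0 < Real.logb 2 K := by linarith
  -- the three limit values
  set LS : ℝ := ⨅ s : ℕ, Filter.atTop.liminf fun n => rhoFS k (s+1) (pre S n) with hLS
  set LT : ℝ := ⨅ s : ℕ, Filter.atTop.liminf fun n => rhoFS k (s+1) (pre T n) with hLT
  set M : ℕ → ℝ := fun r => ⨅ s : ℕ,
    Filter.atTop.liminf fun n => rhoFSMutual k r (s+1) (pre S n) (pre T n) with hM
  have hdimS : dimFS k S = LS := (dim_conv hk S).limUnder_eq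
  have hdimT : dimFS k T = LT := (dim_conv hk T).limUnder_eq
  -- Fm bounds
  have hFm_lb : ∀ r t, -((K : ℝ)^2) ≤
      Filter.atTop.liminf fun n => rhoFSMutual k r t (pre S n) (pre T n) := by
    intro r t
    rcases Nat.eq_zero_or_pos t with rfl | htpos
    · apply le_myliminf (fun n => rho_mut_lb hk S T r 0 n) (C := 2 * (K:ℝ))
      intro n
      rw [rhoFSMutual, rhoFS_zero hk, rhoFS_zero hk]
      have h3 := rhoFSJoint_nonneg hk r (pre S n) (pre T n)
      have h4 : (2:ℝ) ≤ (K:ℝ) := by exact_mod_cast hk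
      linarith
    · exact le_myliminf (fun n => rho_mut_lb hk S T r t n)
        (fun n => rho_mut_ub hk S T r htpos n)
  have hFm_ub : ∀ r t, 1 ≤ t →
      (Filter.atTop.liminf fun n => rhoFSMutual k r t (pre S n) (pre T n))
        ≤ 2 * (K : ℝ) := by
    intro r t ht
    exact myliminf_le (fun n => rho_mut_ub hk S T r ht n) (fun n => rho_mut_lb hk S T r t n)
  have hMbddB : ∀ r, BddBelow (Set.range fun s : ℕ =>
      Filter.atTop.liminf fun n => rhoFSMutual k r (s+1) (pre S n) (pre T n)) := by
    intro r
    refine ⟨-((K : ℝ)^2), ?_⟩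
    rintro x ⟨s, rfl⟩
    exact hFm_lb r (s+1)
  -- inner limUnder equals M r
  have hmdim : mdimFS k S T = limUnder Filter.atTop M := by
    rw [mdimFS]
    congr 1
    funext r
    exact (mut_conv hk S T r).limUnder_eq
  -- M is bounded above by 2K
  have hM_ub : ∀ r, M r ≤ 2 * (K : ℝ) := by
    intro r
    refine le_trans (ciInf_le (hMbddB r) 0) ?_
    exact hFm_ub r 1 (le_refl 1)
  -- M is monotone for r ≥ 1
  have hM_mono : ∀ r r', 1 ≤ r → r ≤ r' → M r ≤ M r' := by
    intro r r' hr hrr'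
    apply ciInf_mono (hMbddB r)
    intro s
    apply myliminf_le_liminf (Filter.Eventually.of_forall fun n => ?_)
      (fun n => rho_mut_lb hk S T r (s+1) n) (fun n => rho_mut_ub hk S T r' (by omega) n)
    have hj := rhoFSJoint_anti hk hr hrr' (pre S n) (pre T n)
    rw [rhoFSMutual, rhoFSMutual]
    linarith
  -- key claim : M r ≤ min LS LT for r ≥ 1
  have hkey : ∀ r, 1 ≤ r → M r ≤ min LS LT := by
    intro r hr
    apply le_of_forall_pos_le_add
    intro ε hε
    -- pick indices approximating the infima
    obtain ⟨s1, hs1⟩ := exists_lt_of_ciInf_lt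
      (show (⨅ s : ℕ, Filter.atTop.liminf fun n => rhoFS k (s+1) (pre S n)) < LS + ε/2 by
        rw [← hLS]; linarith)
    obtain ⟨s2, hs2⟩ := exists_lt_of_ciInf_lt
      (show (⨅ s : ℕ, Filter.atTop.liminf fun n => rhoFS k (s+1) (pre T n)) < LT + ε/2 by
        rw [← hLT]; linarith)
    -- pick a block length m with small penalty
    have hpen := penalty_tendsto (lg (r:ℝ)) ((r:ℝ)^2) ((K:ℝ)^2) (Real.logb 2 K)
      (by
        have : (1:ℝ) ≤ (r:ℝ) := by exact_mod_cast hr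
        positivity)
      (by
        have : (2:ℝ) ≤ (K:ℝ) := by exact_mod_cast hk
        positivity)
      hlgKpos
    have hev := (Filter.Tendsto.eventually_le_const (show (0:ℝ) < ε/2 by linarith) hpen).and
      (Filter.eventually_ge_atTop 1)
    obtain ⟨m, hm_pen, hm1⟩ := hev.exists
    -- pick number of states
    set t : ℕ := max (max (s1+1) (s2+1)) (Fintype.card {l : List k // l.length < m}) with htdef
    have ht1 : 1 ≤ t := le_trans (by omega : 1 ≤ s1 + 1)
      (le_trans (le_max_left _ _) (le_max_left _ _))
    have hts1 : s1 + 1 ≤ t := le_trans (le_max_left _ _) (le_max_left _ _)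
    have hts2 : s2 + 1 ≤ t := le_trans (le_max_right _ _) (le_max_left _ _)
    have htcard : Fintype.card {l : List k // l.length < m} ≤ t := le_max_right _ _
    -- the two eventual core estimates
    have hcoreT : ∀ᶠ n in Filter.atTop,
        rhoFSMutual k r t (pre S n) (pre T n) ≤ rhoFS k t (pre S n) + ε/2 := by
      filter_upwards [Filter.eventually_ge_atTop m] with n hn
      have hce := core_est hk hr hm1 htcard (pre S n) (pre T n) (pre T n)
        (by simp [pre]) (by simp [pre])
        (by
          have hfst : pre T n = List.map Prod.snd ((pre S n).zip (pre T n)) := by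
            rw [List.map_snd_zip (by simp [pre])]
          conv_lhs => rw [hfst]
          exact Hsum_map_le _ _ _)
        (by simpa [pre] using hn)
      rw [rhoFSMutual]
      have h5 := le_trans hce hm_pen
      linarith
    have hcoreS : ∀ᶠ n in Filter.atTop,
        rhoFSMutual k r t (pre S n) (pre T n) ≤ rhoFS k t (pre T n) + ε/2 := by
      filter_upwards [Filter.eventually_ge_atTop m] with n hn
      have hce := core_est hk hr hm1 htcard (pre S n) (pre T n) (pre S n)
        (by simp [pre]) (by simp [pre])
        (by
          have hfst : pre S n = List.map Prod.fst ((pre S n).zip (pre T n)) := by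
            rw [List.map_fst_zip (by simp [pre])]
          conv_lhs => rw [hfst]
          exact Hsum_map_le _ _ _)
        (by simpa [pre] using hn)
      rw [rhoFSMutual]
      have h5 := le_trans hce hm_pen
      linarith
    -- pass to liminfs
    have hMr : M r ≤ Filter.atTop.liminf fun n => rhoFSMutual k r t (pre S n) (pre T n) := by
      have ht' : (t - 1) + 1 = t := by omega
      have h6 := ciInf_le (hMbddB r) (t-1)
      rw [ht'] at h6
      exact h6
    have hsideT : M r ≤ LT + ε := by
      have h1 := myliminf_le_liminf hcoreS (fun n => rho_mut_lb hk S T r t n)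
        (C := (K:ℝ) + ε/2)
        (fun n => add_le_add_left (rhoFS_le_card hk ht1 (pre T n)) _)
      rw [myliminf_add_const (fun n => rhoFS k t (pre T n)) (ε/2)
        (fun n => rhoFS_nonneg hk _ _) (fun n => rhoFS_le_card hk ht1 _)] at h1
      have h2 : (Filter.atTop.liminf fun n => rhoFS k t (pre T n))
          ≤ Filter.atTop.liminf fun n => rhoFS k (s2+1) (pre T n) :=
        myliminf_le_liminf (Filter.Eventually.of_forall fun n =>
            rhoFS_anti hk (by omega) hts2 (pre T n))
          (fun n => rhoFS_nonneg hk _ _) (fun n => rhoFS_le_card hk (by omega) _)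
      linarith [hMr]
    have hsideS : M r ≤ LS + ε := by
      have h1 := myliminf_le_liminf hcoreT (fun n => rho_mut_lb hk S T r t n)
        (C := (K:ℝ) + ε/2)
        (fun n => add_le_add_left (rhoFS_le_card hk ht1 (pre S n)) _)
      rw [myliminf_add_const (fun n => rhoFS k t (pre S n)) (ε/2)
        (fun n => rhoFS_nonneg hk _ _) (fun n => rhoFS_le_card hk ht1 _)] at h1
      have h2 : (Filter.atTop.liminf fun n => rhoFS k t (pre S n))
          ≤ Filter.atTop.liminf fun n => rhoFS k (s1+1) (pre S n) :=
        myliminf_le_liminf (Filter.Eventually.of_forall fun n =>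
            rhoFS_anti hk (by omega) hts1 (pre S n))
          (fun n => rhoFS_nonneg hk _ _) (fun n => rhoFS_le_card hk (by omega) _)
      linarith [hMr]
    have := le_min hsideS hsideT
    rwa [min_add_add_right] at this
  -- convergence of M
  have hMconv : Filter.Tendsto M Filter.atTop (nhds (⨆ s : ℕ, M (s+1))) := by
    rw [← tendsto_add_atTop_iff_nat 1]
    apply tendsto_atTop_ciSup
    · intro s s' hss'
      exact hM_mono (s+1) (s'+1) (by omega) (by omega)
    · refine ⟨2 * (K:ℝ), ?_⟩
      rintro x ⟨s, rfl⟩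
      exact hM_ub (s+1)
  rw [hmdim, hMconv.limUnder_eq, hdimS, hdimT]
  apply ciSup_le
  intro s
  exact hkey (s+1) (by omega)
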